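/- arXiv:2209.03975 — 2 statements merged into one kernel-verified Lean document; each statement's English description precedes it below -/
import Mathlib

section
/- (Corollary 1) Let Λ be a finite metric space of sites with local dimension d ≥ 1 and onsite symmetry (G, u). Let Ω assign real numbers Ω_{A,B}(U) to subsets A, B ⊆ Λ and G-symmetric unitaries U, satisfying: (1) Ω_{A,B}(V·U) = Ω_{A,B}(U) for every G-symmetric unitary V supported on A or on Λ∖A, and (2) Ω_{A,B}(U·V) = Ω_{A,B}(U) for every G-symmetric unitary V supported on B or on Λ∖B. Let U be a G-symmetric strict LPU with operator spreading length ξ and W a G-symmetric FDLU of depth n with gates of radius λ. If (∂_{2nλ} A) ∩ (∂_{2nλ+ξ} B) = ∅, then Ω_{A,B}(W·U) = Ω_{A,B}(U). -/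
open Matrix

/-- A matrix on the many-body space `ι = Λ → Fin d` is supported on `S ⊆ Λ` if its entries
vanish whenever the two configurations differ at a site outside `S`, and otherwise depend
only on the restrictions of the configurations to `S`. -/
def SupportedOn {Λ : Type*} {d : ℕ} (S : Set Λ)
    (M : Matrix (Λ → Fin d) (Λ → Fin d) ℂ) : Prop :=
  (∀ x y, (∃ r ∉ S, x r ≠ y r) → M x y = 0) ∧
  (∀ x y x' y', (∀ r ∈ S, x r = x' r) → (∀ r ∈ S, y r = y' r) →
    (∀ r ∉ S, x r = y r) → (∀ r ∉ S, x' r = y' r) → M x y = M x' y')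

/-- A matrix is unitary if `Mᴴ M = 1 = M Mᴴ`. -/
def IsUnitaryMat {ι : Type*} [Fintype ι] [DecidableEq ι] (M : Matrix ι ι ℂ) : Prop :=
  Mᴴ * M = 1 ∧ M * Mᴴ = 1

/-- The global onsite symmetry operator `U_g`, with entries `∏_r u(g)_{x(r),y(r)}`. -/
def symOp {Λ : Type*} [Fintype Λ] {d : ℕ} {G : Type*}
    (u : G → Matrix (Fin d) (Fin d) ℂ) (g : G) :
    Matrix (Λ → Fin d) (Λ → Fin d) ℂ :=
  Matrix.of fun x y => ∏ r, u g (x r) (y r)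

/-- A matrix is `G`-symmetric if it commutes with every global symmetry operator. -/
def IsGSymm {Λ : Type*} [Fintype Λ] [DecidableEq Λ] {d : ℕ} {G : Type*}
    (u : G → Matrix (Fin d) (Fin d) ℂ)
    (M : Matrix (Λ → Fin d) (Λ → Fin d) ℂ) : Prop :=
  ∀ g, M * symOp u g = symOp u g * M

/-- The `ℓ`-thickened boundary `∂_ℓ S = {r : dist(r,S) ≤ ℓ and dist(r,Λ∖S) ≤ ℓ}`. -/
def thickBd {Λ : Type*} [MetricSpace Λ] (ℓ : ℝ) (S : Set Λ) : Set Λ :=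
  {r | (∃ s ∈ S, dist r s ≤ ℓ) ∧ (∃ s ∈ Sᶜ, dist r s ≤ ℓ)}

/-- A strict locality-preserving unitary with operator spreading length `ξ`: conjugation
maps any operator supported on a single site `r` to one supported in the closed ball of
radius `ξ` around `r`. -/
def IsStrictLPU {Λ : Type*} [Fintype Λ] [DecidableEq Λ] [MetricSpace Λ] {d : ℕ}
    (ξ : ℝ) (U : Matrix (Λ → Fin d) (Λ → Fin d) ℂ) : Prop :=
  IsUnitaryMat U ∧ ∀ (r : Λ) (O : Matrix (Λ → Fin d) (Λ → Fin d) ℂ),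
    SupportedOn {r} O → SupportedOn (Metric.closedBall r ξ) (Uᴴ * O * U)

open scoped Classical
set_option linter.unusedSectionVars false

section BasicLemmas
variable {Λ : Type*} [Fintype Λ] [DecidableEq Λ] {d : ℕ}

lemma supportedOn_mono {S T : Set Λ} (hST : S ⊆ T)
    {M : Matrix (Λ → Fin d) (Λ → Fin d) ℂ} (h : SupportedOn S M) : SupportedOn T M := by
  obtain ⟨h1, h2⟩ := h
  constructor
  · rintro x y ⟨r, hr, hxy⟩
    exact h1 x y ⟨r, fun hS => hr (hST hS), hxy⟩
  · intro x y x' y' hx hy hxy hx'y'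
    by_cases hc : ∀ r, r ∉ S → x r = y r
    · refine h2 x y x' y' (fun r hr => hx r (hST hr)) (fun r hr => hy r (hST hr)) hc ?_
      intro r hr
      by_cases hrT : r ∈ T
      · rw [← hx r hrT, ← hy r hrT]; exact hc r hr
      · exact hx'y' r hrT
    · push_neg at hc
      obtain ⟨r, hrS, hne⟩ := hc
      have hz1 : M x y = 0 := h1 x y ⟨r, hrS, hne⟩
      have hrT : r ∈ T := by
        by_contra hrT
        exact hne (hxy r hrT)
      have hz2 : M x' y' = 0 := h1 x' y' ⟨r, hrS, by rw [← hx r hrT, ← hy r hrT]; exact hne⟩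
      rw [hz1, hz2]

lemma supportedOn_one (S : Set Λ) : SupportedOn S (1 : Matrix (Λ → Fin d) (Λ → Fin d) ℂ) := by
  constructor
  · rintro x y ⟨r, _, hxy⟩
    exact Matrix.one_apply_ne (fun h => hxy (congrFun h r))
  · intro x y x' y' hx hy hxy hx'y'
    by_cases hxyeq : x = y
    · have : x' = y' := by
        funext r
        by_cases hr : r ∈ S
        · rw [← hx r hr, ← hy r hr, hxyeq]
        · exact hx'y' r hr
      rw [hxyeq, this]
      simp [Matrix.one_apply]
    · have : x' ≠ y' := by
        intro h
        apply hxyeq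
        funext r
        by_cases hr : r ∈ S
        · rw [hx r hr, hy r hr, h]
        · exact hxy r hr
      rw [Matrix.one_apply_ne hxyeq, Matrix.one_apply_ne this]

lemma supportedOn_conjTranspose {S : Set Λ} {M : Matrix (Λ → Fin d) (Λ → Fin d) ℂ}
    (h : SupportedOn S M) : SupportedOn S Mᴴ := by
  obtain ⟨h1, h2⟩ := h
  constructor
  · rintro x y ⟨r, hr, hxy⟩
    simp only [Matrix.conjTranspose_apply]
    rw [h1 y x ⟨r, hr, fun h => hxy h.symm⟩, star_zero]
  · intro x y x' y' hx hy hxy hx'y'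
    simp only [Matrix.conjTranspose_apply]
    rw [h2 y x y' x' hy hx (fun r hr => (hxy r hr).symm) (fun r hr => (hx'y' r hr).symm)]

lemma supportedOn_smul {S : Set Λ} (a : ℂ) {M : Matrix (Λ → Fin d) (Λ → Fin d) ℂ}
    (h : SupportedOn S M) : SupportedOn S (a • M) := by
  obtain ⟨h1, h2⟩ := h
  constructor
  · intro x y hxy
    simp only [Matrix.smul_apply, h1 x y hxy, smul_zero]
  · intro x y x' y' hx hy hxy hx'y'
    simp only [Matrix.smul_apply, h2 x y x' y' hx hy hxy hx'y']

lemma supportedOn_sum {S : Set Λ} {α : Type*} (s : Finset α)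
    (f : α → Matrix (Λ → Fin d) (Λ → Fin d) ℂ)
    (h : ∀ i ∈ s, SupportedOn S (f i)) : SupportedOn S (∑ i ∈ s, f i) := by
  constructor
  · intro x y hxy
    rw [Matrix.sum_apply]
    exact Finset.sum_eq_zero fun i hi => (h i hi).1 x y hxy
  · intro x y x' y' hx hy hxy hx'y'
    rw [Matrix.sum_apply, Matrix.sum_apply]
    exact Finset.sum_congr rfl fun i hi => (h i hi).2 x y x' y' hx hy hxy hx'y'

end BasicLemmas
section MulLemmas
variable {Λ : Type*} [Fintype Λ] [DecidableEq Λ] {d : ℕ}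

lemma supportedOn_mul {S T : Set Λ} {M N : Matrix (Λ → Fin d) (Λ → Fin d) ℂ}
    (hM : SupportedOn S M) (hN : SupportedOn T N) : SupportedOn (S ∪ T) (M * N) := by
  obtain ⟨hM1, hM2⟩ := hM
  obtain ⟨hN1, hN2⟩ := hN
  constructor
  · rintro x y ⟨r, hr, hxy⟩
    rw [Matrix.mul_apply]
    refine Finset.sum_eq_zero fun z _ => ?_
    by_cases hxz : x r = z r
    · rw [hN1 z y ⟨r, fun h => hr (Set.mem_union_right S h), fun h => hxy (hxz ▸ h)⟩, mul_zero]
    · rw [hM1 x z ⟨r, fun h => hr (Set.mem_union_left T h), hxz⟩, zero_mul]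
  · intro x y x' y' hx hy hxy hx'y'
    rw [Matrix.mul_apply, Matrix.mul_apply]
    -- involution swapping x r ↔ x' r outside S ∪ T
    set σ : (Λ → Fin d) → (Λ → Fin d) :=
      fun z r => if r ∈ S ∪ T then z r else Equiv.swap (x r) (x' r) (z r) with hσ
    have hσinv : Function.Involutive σ := by
      intro z
      funext r
      simp only [hσ]
      by_cases h : r ∈ S ∪ T
      · simp [h]
      · simp [h, Equiv.swap_apply_self]
    -- key pointwise fact: if z r ≠ x r and r ∉ S ∪ T then σ z r ≠ x' r
    have hkey : ∀ (z : Λ → Fin d) (r : Λ), r ∉ S ∪ T → z r ≠ x r → σ z r ≠ x' r := by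
      intro z r hr hzx
      simp only [hσ, if_neg hr, Equiv.swap_apply_def]
      split_ifs with h1 h2
      · exact absurd h1 hzx
      · exact fun h => hzx (h2.trans h.symm)
      · exact h2
    have hterm : ∀ z, M x z * N z y = M x' (σ z) * N (σ z) y' := by
      intro z
      by_cases hA : ∃ r, r ∉ S ∧ x r ≠ z r
      · obtain ⟨r, hrS, hne⟩ := hA
        have h1 : M x z = 0 := hM1 x z ⟨r, hrS, hne⟩
        have h2 : M x' (σ z) = 0 := by
          refine hM1 x' (σ z) ⟨r, hrS, ?_⟩
          by_cases hrST : r ∈ S ∪ T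
          · have hrT : r ∈ T := hrST.resolve_left hrS
            simp only [hσ, if_pos hrST]
            rw [← hx r hrST]
            exact hne
          · exact fun h => hkey z r hrST (fun hh => hne hh.symm) h.symm
        rw [h1, h2, zero_mul, zero_mul]
      · push_neg at hA
        by_cases hB : ∃ r, r ∉ T ∧ z r ≠ y r
        · obtain ⟨r, hrT, hne⟩ := hB
          have h1 : N z y = 0 := hN1 z y ⟨r, hrT, hne⟩
          have h2 : N (σ z) y' = 0 := by
            refine hN1 (σ z) y' ⟨r, hrT, ?_⟩
            by_cases hrST : r ∈ S ∪ T
            · have hrS : r ∈ S := hrST.resolve_right hrT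
              simp only [hσ, if_pos hrST]
              rw [← hy r hrST]
              exact hne
            · -- r ∉ S ∪ T : then x r = z r (hA) and x r = y r (hxy), contradiction
              exact absurd ((hA r (fun h => hrST (Set.mem_union_left T h))).symm.trans
                (hxy r hrST)) hne
          rw [h1, h2, mul_zero, mul_zero]
        · push_neg at hB
          have hMeq : M x z = M x' (σ z) := by
            refine hM2 x z x' (σ z) (fun r hr => hx r (Set.mem_union_left T hr))
              (fun r hr => by simp only [hσ]; rw [if_pos (Set.mem_union_left T hr)]) (fun r hr => hA r hr) ?_
            intro r hrS
            by_cases hrST : r ∈ S ∪ T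
            · simp only [hσ, if_pos hrST]
              rw [← hA r hrS, ← hx r hrST]
            · simp only [hσ, if_neg hrST]
              rw [← hA r hrS, Equiv.swap_apply_left]
          have hNeq : N z y = N (σ z) y' := by
            refine hN2 z y (σ z) y' (fun r hr => by simp only [hσ]; rw [if_pos (Set.mem_union_right S hr)])
              (fun r hr => hy r (Set.mem_union_right S hr)) (fun r hr => hB r hr) ?_
            intro r hrT
            by_cases hrST : r ∈ S ∪ T
            · have hrS : r ∈ S := hrST.resolve_right hrT
              simp only [hσ, if_pos hrST]
              rw [hB r hrT, hy r hrST]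
            · simp only [hσ, if_neg hrST]
              rw [← hA r (fun h => hrST (Set.mem_union_left T h)), Equiv.swap_apply_left,
                hx'y' r hrST]
          rw [hMeq, hNeq]
    calc ∑ z, M x z * N z y = ∑ z, M x' (σ z) * N (σ z) y' := by
          exact Finset.sum_congr rfl fun z _ => hterm z
      _ = ∑ z, M x' z * N z y' := hσinv.bijective.sum_comp (fun z => M x' z * N z y')

lemma supportedOn_comm {S T : Set Λ} {M N : Matrix (Λ → Fin d) (Λ → Fin d) ℂ}
    (hM : SupportedOn S M) (hN : SupportedOn T N) (hST : Disjoint S T) : M * N = N * M := by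
  obtain ⟨hM1, hM2⟩ := hM
  obtain ⟨hN1, hN2⟩ := hN
  have hd : ∀ r, r ∈ S → r ∉ T := fun r hr => fun h => Set.disjoint_left.mp hST hr h
  ext x y
  rw [Matrix.mul_apply, Matrix.mul_apply]
  set z₀ : Λ → Fin d := fun r => if r ∈ S then y r else x r with hz₀
  set w₀ : Λ → Fin d := fun r => if r ∈ T then y r else x r with hw₀
  have hL : ∑ z, M x z * N z y = M x z₀ * N z₀ y := by
    refine Finset.sum_eq_single z₀ (fun z _ hz => ?_) (by simp)
    have : ∃ r, z r ≠ z₀ r := by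
      by_contra h
      push_neg at h
      exact hz (funext h)
    obtain ⟨r, hr⟩ := this
    by_cases hrS : r ∈ S
    · rw [hN1 z y ⟨r, hd r hrS, by simpa [hz₀, hrS] using hr⟩, mul_zero]
    · rw [hM1 x z ⟨r, hrS, fun h => hr (by simp [hz₀, hrS, h.symm])⟩, zero_mul]
  have hR : ∑ z, N x z * M z y = N x w₀ * M w₀ y := by
    refine Finset.sum_eq_single w₀ (fun z _ hz => ?_) (by simp)
    have : ∃ r, z r ≠ w₀ r := by
      by_contra h
      push_neg at h
      exact hz (funext h)
    obtain ⟨r, hr⟩ := this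
    by_cases hrT : r ∈ T
    · rw [hM1 z y ⟨r, fun h => hd r h hrT, by simpa [hw₀, hrT] using hr⟩, mul_zero]
    · rw [hN1 x z ⟨r, hrT, fun h => hr (by simp [hw₀, hrT, h.symm])⟩, zero_mul]
  rw [hL, hR]
  by_cases hxy : ∀ r, r ∉ S ∪ T → x r = y r
  · have h1 : M x z₀ = M w₀ y := by
      refine hM2 x z₀ w₀ y (fun r hr => by simp only [hw₀]; rw [if_neg (hd r hr)]) (fun r hr => by simp only [hz₀]; rw [if_pos hr])
        (fun r hr => by simp [hz₀, hr]) ?_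
      intro r hrS
      by_cases hrT : r ∈ T
      · simp [hw₀, hrT]
      · simp only [hw₀, if_neg hrT]
        exact hxy r (by simp [hrS, hrT])
    have h2 : N z₀ y = N x w₀ := by
      refine hN2 z₀ y x w₀ (fun r hr => by simp only [hz₀]; rw [if_neg (fun h => hd r h hr)])
        (fun r hr => by simp [hw₀, hr]) ?_ (fun r hr => by simp [hw₀, hr])
      intro r hrT
      by_cases hrS : r ∈ S
      · simp [hz₀, hrS]
      · simp only [hz₀, if_neg hrS]
        exact hxy r (by simp [hrS, hrT])
    rw [h1, h2, mul_comm]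
  · push_neg at hxy
    obtain ⟨r, hrST, hne⟩ := hxy
    have hrS : r ∉ S := fun h => hrST (Set.mem_union_left T h)
    have hrT : r ∉ T := fun h => hrST (Set.mem_union_right S h)
    rw [hN1 z₀ y ⟨r, hrT, by simpa [hz₀, hrS] using hne⟩,
      hM1 w₀ y ⟨r, hrS, by simpa [hw₀, hrT] using hne⟩, mul_zero, mul_zero]

end MulLemmas
section AlgLemmas
variable {Λ : Type*} [Fintype Λ] [DecidableEq Λ] {d : ℕ} {G : Type*}
variable {u : G → Matrix (Fin d) (Fin d) ℂ}

lemma isUnitaryMat_one : IsUnitaryMat (1 : Matrix (Λ → Fin d) (Λ → Fin d) ℂ) := by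
  constructor <;> simp

lemma IsUnitaryMat.mul {M N : Matrix (Λ → Fin d) (Λ → Fin d) ℂ}
    (hM : IsUnitaryMat M) (hN : IsUnitaryMat N) : IsUnitaryMat (M * N) := by
  constructor
  · rw [Matrix.conjTranspose_mul]
    calc Nᴴ * Mᴴ * (M * N) = Nᴴ * (Mᴴ * M) * N := by noncomm_ring
      _ = 1 := by rw [hM.1, mul_one, hN.1]
  · rw [Matrix.conjTranspose_mul]
    calc M * N * (Nᴴ * Mᴴ) = M * (N * Nᴴ) * Mᴴ := by noncomm_ring
      _ = 1 := by rw [hN.2, mul_one, hM.2]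

lemma IsUnitaryMat.ct {M : Matrix (Λ → Fin d) (Λ → Fin d) ℂ}
    (hM : IsUnitaryMat M) : IsUnitaryMat Mᴴ :=
  ⟨by rw [Matrix.conjTranspose_conjTranspose]; exact hM.2,
   by rw [Matrix.conjTranspose_conjTranspose]; exact hM.1⟩

lemma isGSymm_one : IsGSymm u (1 : Matrix (Λ → Fin d) (Λ → Fin d) ℂ) := by
  intro g; rw [one_mul, mul_one]

lemma IsGSymm.mul {M N : Matrix (Λ → Fin d) (Λ → Fin d) ℂ}
    (hM : IsGSymm u M) (hN : IsGSymm u N) : IsGSymm u (M * N) := by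
  intro g
  calc M * N * symOp u g = M * (N * symOp u g) := by rw [mul_assoc]
    _ = M * (symOp u g * N) := by rw [hN g]
    _ = M * symOp u g * N := by rw [mul_assoc]
    _ = symOp u g * (M * N) := by rw [hM g, mul_assoc]

lemma IsGSymm.ct {M : Matrix (Λ → Fin d) (Λ → Fin d) ℂ}
    (hM : IsGSymm u M) (hMu : IsUnitaryMat M) : IsGSymm u Mᴴ := by
  intro g
  calc Mᴴ * symOp u g = Mᴴ * symOp u g * (M * Mᴴ) := by rw [hMu.2, mul_one]
    _ = Mᴴ * (symOp u g * M) * Mᴴ := by noncomm_ring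
    _ = Mᴴ * (M * symOp u g) * Mᴴ := by rw [← hM g]
    _ = (Mᴴ * M) * (symOp u g * Mᴴ) := by noncomm_ring
    _ = symOp u g * Mᴴ := by rw [hMu.1, one_mul]

lemma isUnitaryMat_listProd (l : List (Matrix (Λ → Fin d) (Λ → Fin d) ℂ))
    (h : ∀ M ∈ l, IsUnitaryMat M) : IsUnitaryMat l.prod := by
  induction l with
  | nil => exact isUnitaryMat_one
  | cons a t ih =>
    rw [List.prod_cons]
    exact (h a ((List.mem_cons_self (a := a) (l := t)))).mul (ih fun M hM => h M (List.mem_cons_of_mem a hM))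

lemma isGSymm_listProd (l : List (Matrix (Λ → Fin d) (Λ → Fin d) ℂ))
    (h : ∀ M ∈ l, IsGSymm u M) : IsGSymm u l.prod := by
  induction l with
  | nil => exact isGSymm_one
  | cons a t ih =>
    rw [List.prod_cons]
    exact (h a ((List.mem_cons_self (a := a) (l := t)))).mul (ih fun M hM => h M (List.mem_cons_of_mem a hM))

lemma IsUnitaryMat.conj {M C : Matrix (Λ → Fin d) (Λ → Fin d) ℂ}
    (hM : IsUnitaryMat M) (hC : IsUnitaryMat C) : IsUnitaryMat (Cᴴ * M * C) :=
  (hC.ct.mul hM).mul hC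

lemma IsGSymm.conj {M C : Matrix (Λ → Fin d) (Λ → Fin d) ℂ}
    (hM : IsGSymm u M) (hC : IsGSymm u C) (hCu : IsUnitaryMat C) :
    IsGSymm u (Cᴴ * M * C) :=
  ((hC.ct hCu).mul hM).mul hC

lemma supportedOn_listProd {T : Set Λ} (l : List (Matrix (Λ → Fin d) (Λ → Fin d) ℂ))
    (h : ∀ M ∈ l, SupportedOn T M) : SupportedOn T l.prod := by
  induction l with
  | nil => exact supportedOn_one T
  | cons a t ih =>
    rw [List.prod_cons]
    have := supportedOn_mul (h a ((List.mem_cons_self (a := a) (l := t))))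
      (ih fun M hM => h M (List.mem_cons_of_mem a hM))
    rwa [Set.union_self] at this

lemma conj_listProd {U : Matrix (Λ → Fin d) (Λ → Fin d) ℂ} (hU : IsUnitaryMat U)
    (l : List (Matrix (Λ → Fin d) (Λ → Fin d) ℂ)) :
    Uᴴ * l.prod * U = (l.map fun X => Uᴴ * X * U).prod := by
  induction l with
  | nil => rw [List.map_nil, List.prod_nil, mul_one, hU.1]
  | cons a t ih =>
    rw [List.map_cons, List.prod_cons, List.prod_cons, ← ih]
    calc Uᴴ * (a * t.prod) * U = Uᴴ * a * (U * Uᴴ) * t.prod * U := by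
          rw [hU.2, mul_one]; noncomm_ring
      _ = Uᴴ * a * U * (Uᴴ * t.prod * U) := by noncomm_ring

end AlgLemmas
section SiteUnit
variable {Λ : Type*} [Fintype Λ] [DecidableEq Λ] {d : ℕ}

/-- Single-site matrix unit `|p⟩⟨q|` at site `r`, identity elsewhere. -/
def siteUnit (r : Λ) (p q : Fin d) : Matrix (Λ → Fin d) (Λ → Fin d) ℂ :=
  Matrix.of fun x y => if x r = p ∧ y r = q ∧ ∀ s, s ≠ r → x s = y s then 1 else 0

lemma supportedOn_siteUnit (r : Λ) (p q : Fin d) :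
    SupportedOn ({r} : Set Λ) (siteUnit r p q) := by
  constructor
  · rintro x y ⟨s, hs, hxy⟩
    have hsr : s ≠ r := fun h => hs (by simp [h])
    simp only [siteUnit, Matrix.of_apply, ite_eq_right_iff]
    rintro ⟨-, -, hoff⟩
    exact absurd (hoff s hsr) hxy
  · intro x y x' y' hx hy hxy hx'y'
    have hxr : x r = x' r := hx r rfl
    have hyr : y r = y' r := hy r rfl
    simp only [siteUnit, Matrix.of_apply]
    have hiff : (x r = p ∧ y r = q ∧ ∀ s, s ≠ r → x s = y s) ↔
        (x' r = p ∧ y' r = q ∧ ∀ s, s ≠ r → x' s = y' s) := by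
      constructor
      · rintro ⟨h1, h2, -⟩
        exact ⟨hxr ▸ h1, hyr ▸ h2, fun s hs => hx'y' s (fun hmem => hs hmem)⟩
      · rintro ⟨h1, h2, -⟩
        exact ⟨hxr.symm ▸ h1, hyr.symm ▸ h2, fun s hs => hxy s (fun hmem => hs hmem)⟩
    rw [if_congr hiff rfl rfl]

lemma siteUnit_mul_apply (r : Λ) (p q : Fin d)
    (P : Matrix (Λ → Fin d) (Λ → Fin d) ℂ) (x y : Λ → Fin d) :
    (siteUnit r p q * P) x y =
      if x r = p then P (Function.update x r q) y else 0 := by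
  rw [Matrix.mul_apply]
  rw [Finset.sum_eq_single (Function.update x r q)]
  · have h2 : Function.update x r q r = q := Function.update_self r q x
    have h3 : ∀ s, s ≠ r → x s = Function.update x r q s :=
      fun s hs => (Function.update_of_ne hs q x).symm
    have hcond : (x r = p ∧ Function.update x r q r = q ∧
        ∀ s, s ≠ r → x s = Function.update x r q s) ↔ x r = p :=
      ⟨fun h => h.1, fun h => ⟨h, h2, h3⟩⟩
    simp only [siteUnit, Matrix.of_apply]
    rw [if_congr hcond rfl rfl]
    split_ifs with h
    · rw [one_mul]
    · rw [zero_mul]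
  · intro z _ hz
    have : ¬(x r = p ∧ z r = q ∧ ∀ s, s ≠ r → x s = z s) := by
      rintro ⟨-, hq, hoff⟩
      apply hz
      funext s
      by_cases hs : s = r
      · subst hs; rw [hq, Function.update_self]
      · rw [Function.update_of_ne hs, ← hoff s hs]
    simp only [siteUnit, Matrix.of_apply, if_neg this, zero_mul]
  · intro h
    exact absurd (Finset.mem_univ _) h

lemma prodSite_apply (l : List Λ) (hnd : l.Nodup) (a b : Λ → Fin d) :
    ∀ x y : Λ → Fin d,
    ((l.map fun r => siteUnit r (a r) (b r)).prod) x y =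
      if (∀ r ∈ l, x r = a r ∧ y r = b r) ∧ (∀ r ∉ l, x r = y r) then 1 else 0 := by
  induction l with
  | nil =>
    intro x y
    rw [List.map_nil, List.prod_nil, Matrix.one_apply]
    refine (if_congr ?_ rfl rfl).symm
    constructor
    · rintro ⟨-, h⟩
      funext s
      exact h s (List.not_mem_nil)
    · intro h
      exact ⟨fun s hs => absurd hs (List.not_mem_nil), fun s _ => congrFun h s⟩
  | cons r0 t ih =>
    intro x y
    have hr : r0 ∉ t := (List.nodup_cons.mp hnd).1
    have ht : t.Nodup := (List.nodup_cons.mp hnd).2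
    rw [List.map_cons, List.prod_cons, siteUnit_mul_apply, ih ht]
    by_cases h1 : x r0 = a r0
    · rw [if_pos h1]
      refine if_congr ?_ rfl rfl
      constructor
      · rintro ⟨hA1, hA2⟩
        refine ⟨?_, ?_⟩
        · intro s hs
          rcases List.mem_cons.mp hs with hh | hh
          · rw [hh]
            refine ⟨h1, ?_⟩
            have h5 := hA2 r0 hr
            rw [Function.update_self] at h5
            exact h5.symm
          · have hne : s ≠ r0 := fun hh2 => hr (hh2 ▸ hh)
            have h5 := hA1 s hh
            rwa [Function.update_of_ne hne] at h5
        · intro s hs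
          have hne : s ≠ r0 := fun hh => hs (hh ▸ (List.mem_cons_self (a := r0) (l := t)))
          have hnt : s ∉ t := fun hh => hs (List.mem_cons_of_mem r0 hh)
          have h5 := hA2 s hnt
          rwa [Function.update_of_ne hne] at h5
      · rintro ⟨hB1, hB2⟩
        refine ⟨?_, ?_⟩
        · intro s hs
          have hne : s ≠ r0 := fun hh => hr (hh ▸ hs)
          rw [Function.update_of_ne hne]
          exact hB1 s (List.mem_cons_of_mem r0 hs)
        · intro s hnt
          by_cases hne : s = r0
          · rw [hne, Function.update_self]
            exact (hB1 r0 ((List.mem_cons_self (a := r0) (l := t)))).2.symm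
          · rw [Function.update_of_ne hne]
            exact hB2 s (fun hh => (List.mem_cons.mp hh).elim hne hnt)
    · rw [if_neg h1, if_neg]
      rintro ⟨hB1, -⟩
      exact h1 (hB1 r0 ((List.mem_cons_self (a := r0) (l := t)))).1

end SiteUnit
section Decomp
variable {Λ : Type*} [Fintype Λ] [DecidableEq Λ] {d : ℕ}

lemma supportedOn_decomp (hd0 : 0 < d) {S : Set Λ} {M : Matrix (Λ → Fin d) (Λ → Fin d) ℂ}
    (hM : SupportedOn S M) :
    M = ∑ a : Λ → Fin d, ∑ b : Λ → Fin d,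
      (if (∀ r ∉ S, a r = (⟨0, hd0⟩ : Fin d) ∧ b r = (⟨0, hd0⟩ : Fin d)) then M a b else 0) •
        ((Finset.univ.filter (· ∈ S)).toList.map fun r => siteUnit r (a r) (b r)).prod := by
  set z0 : Fin d := ⟨0, hd0⟩
  set l : List Λ := (Finset.univ.filter (· ∈ S)).toList with hl
  have hmem : ∀ r : Λ, r ∈ l ↔ r ∈ S := by
    intro r
    simp [hl, Finset.mem_toList, Finset.mem_filter]
  have hnd : l.Nodup := Finset.nodup_toList _
  ext x y
  simp only [Matrix.sum_apply, Matrix.smul_apply, prodSite_apply l hnd, smul_eq_mul]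
  by_cases hxy : ∀ r, r ∉ S → x r = y r
  · set a₀ : Λ → Fin d := fun r => if r ∈ S then x r else z0 with ha₀
    set b₀ : Λ → Fin d := fun r => if r ∈ S then y r else z0 with hb₀
    rw [Finset.sum_eq_single a₀]
    · rw [Finset.sum_eq_single b₀]
      · have hC : ∀ r ∉ S, a₀ r = z0 ∧ b₀ r = z0 := by
          intro r hr
          constructor <;> simp [ha₀, hb₀, if_neg hr]
        have hD : (∀ r ∈ l, x r = a₀ r ∧ y r = b₀ r) ∧ (∀ r ∉ l, x r = y r) := by
          constructor
          · intro r hr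
            have hrS : r ∈ S := (hmem r).mp hr
            constructor <;> simp [ha₀, hb₀, if_pos hrS]
          · intro r hr
            exact hxy r (fun h => hr ((hmem r).mpr h))
        rw [if_pos hC, if_pos hD, mul_one]
        refine (hM.2 a₀ b₀ x y ?_ ?_ ?_ hxy).symm
        · intro r hr; simp [ha₀, if_pos hr]
        · intro r hr; simp [hb₀, if_pos hr]
        · intro r hr; simp [ha₀, hb₀, if_neg hr]
      · intro b _ hb
        by_cases hC : ∀ r ∉ S, a₀ r = z0 ∧ b r = z0
        · by_cases hD : (∀ r ∈ l, x r = a₀ r ∧ y r = b r) ∧ (∀ r ∉ l, x r = y r)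
          · exfalso
            apply hb
            funext r
            by_cases hrS : r ∈ S
            · rw [← (hD.1 r ((hmem r).mpr hrS)).2, hb₀]
              simp [if_pos hrS]
            · rw [(hC r hrS).2, hb₀]
              simp [if_neg hrS]
          · rw [if_neg hD, mul_zero]
        · rw [if_neg hC, zero_mul]
      · intro h; exact absurd (Finset.mem_univ _) h
    · intro a _ ha
      refine Finset.sum_eq_zero fun b _ => ?_
      by_cases hC : ∀ r ∉ S, a r = z0 ∧ b r = z0
      · by_cases hD : (∀ r ∈ l, x r = a r ∧ y r = b r) ∧ (∀ r ∉ l, x r = y r)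
        · exfalso
          apply ha
          funext r
          by_cases hrS : r ∈ S
          · rw [← (hD.1 r ((hmem r).mpr hrS)).1, ha₀]
            simp [if_pos hrS]
          · rw [(hC r hrS).1, ha₀]
            simp [if_neg hrS]
        · rw [if_neg hD, mul_zero]
      · rw [if_neg hC, zero_mul]
    · intro h; exact absurd (Finset.mem_univ _) h
  · push_neg at hxy
    obtain ⟨r, hrS, hne⟩ := hxy
    rw [hM.1 x y ⟨r, hrS, hne⟩]
    refine (Finset.sum_eq_zero fun a _ => Finset.sum_eq_zero fun b _ => ?_).symm
    have hD : ¬((∀ r' ∈ l, x r' = a r' ∧ y r' = b r') ∧ (∀ r' ∉ l, x r' = y r')) := by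
      rintro ⟨-, h2⟩
      exact hne (h2 r (fun h => hrS ((hmem r).mp h)))
    rw [if_neg hD, mul_zero]

end Decomp

section ConjLPU
variable {Λ : Type*} [Fintype Λ] [DecidableEq Λ] [MetricSpace Λ] {d : ℕ}

lemma conj_lpu (hd0 : 0 < d) {ξ : ℝ} {U : Matrix (Λ → Fin d) (Λ → Fin d) ℂ}
    (hU : IsStrictLPU ξ U) {S T : Set Λ} {M : Matrix (Λ → Fin d) (Λ → Fin d) ℂ}
    (hM : SupportedOn S M) (hT : ∀ r ∈ S, Metric.closedBall r ξ ⊆ T) :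
    SupportedOn T (Uᴴ * M * U) := by
  set z0 : Fin d := ⟨0, hd0⟩
  set l : List Λ := (Finset.univ.filter (· ∈ S)).toList with hl
  have hmem : ∀ r : Λ, r ∈ l ↔ r ∈ S := by
    intro r
    simp [hl, Finset.mem_toList, Finset.mem_filter]
  have key : Uᴴ * M * U = ∑ a : Λ → Fin d, ∑ b : Λ → Fin d,
      (if (∀ r ∉ S, a r = z0 ∧ b r = z0) then M a b else 0) •
        (Uᴴ * (l.map fun r => siteUnit r (a r) (b r)).prod * U) := by
    conv_lhs => rw [supportedOn_decomp hd0 hM]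
    simp only [Matrix.mul_sum, Matrix.sum_mul, Matrix.mul_smul, Matrix.smul_mul]
    rfl
  rw [key]
  refine supportedOn_sum _ _ fun a _ => supportedOn_sum _ _ fun b _ => supportedOn_smul _ ?_
  rw [conj_listProd hU.1]
  refine supportedOn_listProd _ fun X hX => ?_
  rw [List.mem_map] at hX
  obtain ⟨Y, hY, rfl⟩ := hX
  rw [List.mem_map] at hY
  obtain ⟨r, hrl, rfl⟩ := hY
  exact supportedOn_mono (hT r ((hmem r).mp hrl)) (hU.2 r _ (supportedOn_siteUnit r _ _))

end ConjLPU
section ConjLayer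
variable {Λ : Type*} [Fintype Λ] [DecidableEq Λ] [MetricSpace Λ] {d : ℕ}

lemma conj_layer (lam : ℝ) (l : List ((Matrix (Λ → Fin d) (Λ → Fin d) ℂ) × Λ))
    (hunit : ∀ p ∈ l, IsUnitaryMat p.1)
    (hsupp : ∀ p ∈ l, SupportedOn (Metric.closedBall p.2 lam) p.1)
    (hdisj : l.Pairwise fun p q =>
      Disjoint (Metric.closedBall p.2 lam) (Metric.closedBall q.2 lam)) :
    ∀ (T : Set Λ) (M : Matrix (Λ → Fin d) (Λ → Fin d) ℂ), SupportedOn T M →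
      SupportedOn (T ∪ {x | ∃ p ∈ l, ¬ Disjoint (Metric.closedBall p.2 lam) T ∧
          x ∈ Metric.closedBall p.2 lam})
        ((l.map Prod.fst).prodᴴ * M * (l.map Prod.fst).prod) := by
  induction l with
  | nil =>
    intro T M hM
    simp only [List.map_nil, List.prod_nil, Matrix.conjTranspose_one, one_mul, mul_one]
    exact supportedOn_mono Set.subset_union_left hM
  | cons p t ih =>
    intro T M hM
    have hpu : IsUnitaryMat p.1 := hunit p ((List.mem_cons_self (a := p) (l := t)))
    have hps : SupportedOn (Metric.closedBall p.2 lam) p.1 :=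
      hsupp p ((List.mem_cons_self (a := p) (l := t)))
    have htu : ∀ q ∈ t, IsUnitaryMat q.1 := fun q hq => hunit q (List.mem_cons_of_mem p hq)
    have hts : ∀ q ∈ t, SupportedOn (Metric.closedBall q.2 lam) q.1 :=
      fun q hq => hsupp q (List.mem_cons_of_mem p hq)
    have htd := (List.pairwise_cons.mp hdisj).2
    have hhead := (List.pairwise_cons.mp hdisj).1
    have heq : (((p :: t).map Prod.fst).prod)ᴴ * M * ((p :: t).map Prod.fst).prod
        = ((t.map Prod.fst).prod)ᴴ * (p.1ᴴ * M * p.1) * (t.map Prod.fst).prod := by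
      rw [List.map_cons, List.prod_cons, Matrix.conjTranspose_mul]
      noncomm_ring
    rw [heq]
    by_cases hdisjT : Disjoint (Metric.closedBall p.2 lam) T
    · have hcomm : p.1 * M = M * p.1 := supportedOn_comm hps hM hdisjT
      have hfix : p.1ᴴ * M * p.1 = M := by
        rw [mul_assoc, ← hcomm, ← mul_assoc, hpu.1, one_mul]
      rw [hfix]
      refine supportedOn_mono ?_ (ih htu hts htd T M hM)
      apply Set.union_subset_union_right
      rintro x ⟨q, hq, hnd, hx⟩
      exact ⟨q, List.mem_cons_of_mem p hq, hnd, hx⟩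
    · have h1 : SupportedOn (T ∪ Metric.closedBall p.2 lam) (p.1ᴴ * M * p.1) := by
        have := supportedOn_mul (supportedOn_mul (supportedOn_conjTranspose hps) hM) hps
        refine supportedOn_mono ?_ this
        rintro x ((hx | hx) | hx)
        · exact Or.inr hx
        · exact Or.inl hx
        · exact Or.inr hx
      refine supportedOn_mono ?_ (ih htu hts htd _ _ h1)
      apply Set.union_subset
      · apply Set.union_subset
        · exact Set.subset_union_left
        · intro x hx
          exact Set.mem_union_right _ ⟨p, (List.mem_cons_self (a := p) (l := t)), hdisjT, hx⟩
      · rintro x ⟨q, hq, hnd, hx⟩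
        refine Set.mem_union_right _ ⟨q, List.mem_cons_of_mem p hq, ?_, hx⟩
        intro hdq
        apply hnd
        rw [Set.disjoint_union_right]
        exact ⟨hdq, (hhead q hq).symm⟩
  
lemma conj_layers (lam : ℝ) (hlam : 0 ≤ lam)
    (LL : List (List ((Matrix (Λ → Fin d) (Λ → Fin d) ℂ) × Λ)))
    (hunit : ∀ L ∈ LL, ∀ p ∈ L, IsUnitaryMat p.1)
    (hsupp : ∀ L ∈ LL, ∀ p ∈ L, SupportedOn (Metric.closedBall p.2 lam) p.1)
    (hdisj : ∀ L ∈ LL, L.Pairwise fun p q =>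
      Disjoint (Metric.closedBall p.2 lam) (Metric.closedBall q.2 lam)) (c0 : Λ) :
    ∀ (ρ : ℝ) (M : Matrix (Λ → Fin d) (Λ → Fin d) ℂ),
      SupportedOn (Metric.closedBall c0 ρ) M →
      SupportedOn (Metric.closedBall c0 (ρ + 2 * LL.length * lam))
        (((LL.map fun L => (L.map Prod.fst).prod).prod)ᴴ * M *
          (LL.map fun L => (L.map Prod.fst).prod).prod) := by
  induction LL with
  | nil =>
    intro ρ M hM
    simp only [List.map_nil, List.prod_nil, Matrix.conjTranspose_one, one_mul, mul_one,
      List.length_nil]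
    refine supportedOn_mono (Metric.closedBall_subset_closedBall ?_) hM
    simp
  | cons L t ih =>
    intro ρ M hM
    have heq : (((L :: t).map fun L => (L.map Prod.fst).prod).prod)ᴴ * M *
          ((L :: t).map fun L => (L.map Prod.fst).prod).prod
        = ((t.map fun L => (L.map Prod.fst).prod).prod)ᴴ *
            (((L.map Prod.fst).prod)ᴴ * M * (L.map Prod.fst).prod) *
            (t.map fun L => (L.map Prod.fst).prod).prod := by
      rw [List.map_cons, List.prod_cons, Matrix.conjTranspose_mul]
      noncomm_ring
    rw [heq]
    have h1 := conj_layer lam L (hunit L ((List.mem_cons_self (a := L) (l := t))))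
      (hsupp L ((List.mem_cons_self (a := L) (l := t)))) (hdisj L ((List.mem_cons_self (a := L) (l := t))))
      (Metric.closedBall c0 ρ) M hM
    have h1' : SupportedOn (Metric.closedBall c0 (ρ + 2 * lam))
        (((L.map Prod.fst).prod)ᴴ * M * (L.map Prod.fst).prod) := by
      refine supportedOn_mono ?_ h1
      apply Set.union_subset
      · exact Metric.closedBall_subset_closedBall (by linarith)
      · rintro x ⟨q, _, hnd, hx⟩
        rw [Set.not_disjoint_iff] at hnd
        obtain ⟨y, hy1, hy2⟩ := hnd
        rw [Metric.mem_closedBall] at hx hy1 hy2 ⊢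
        calc dist x c0 ≤ dist x q.2 + dist q.2 y + dist y c0 := dist_triangle4 x q.2 y c0
          _ ≤ lam + lam + ρ := by
              have h' : dist q.2 y ≤ lam := by rw [dist_comm]; exact hy1
              exact add_le_add (add_le_add hx h') hy2
          _ = ρ + 2 * lam := by ring
    have h2 := ih (fun L' hL' => hunit L' (List.mem_cons_of_mem L hL'))
      (fun L' hL' => hsupp L' (List.mem_cons_of_mem L hL'))
      (fun L' hL' => hdisj L' (List.mem_cons_of_mem L hL'))
      (ρ + 2 * lam) _ h1'
    refine supportedOn_mono (Metric.closedBall_subset_closedBall (le_of_eq ?_)) h2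
    rw [List.length_cons]
    push_cast
    ring

end ConjLayer
section Main
variable {Λ : Type*} [Fintype Λ] [DecidableEq Λ] [MetricSpace Λ] {d : ℕ} {G : Type*}
variable {u : G → Matrix (Fin d) (Fin d) ℂ}

lemma peel_gates
    (hd0 : 0 < d)
    (Ω : Set Λ → Set Λ → Matrix (Λ → Fin d) (Λ → Fin d) ℂ → ℝ)
    (hΩ1 : ∀ (A B : Set Λ) (U V : Matrix (Λ → Fin d) (Λ → Fin d) ℂ),
      IsUnitaryMat U → IsGSymm u U → IsUnitaryMat V → IsGSymm u V →
      (SupportedOn A V ∨ SupportedOn Aᶜ V) → Ω A B (V * U) = Ω A B U)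
    (hΩ2 : ∀ (A B : Set Λ) (U V : Matrix (Λ → Fin d) (Λ → Fin d) ℂ),
      IsUnitaryMat U → IsGSymm u U → IsUnitaryMat V → IsGSymm u V →
      (SupportedOn B V ∨ SupportedOn Bᶜ V) → Ω A B (U * V) = Ω A B U)
    (A B : Set Λ) (ξ lam : ℝ) (hξ : 0 ≤ ξ) (hlam : 0 ≤ lam)
    (U : Matrix (Λ → Fin d) (Λ → Fin d) ℂ) (hU : IsStrictLPU ξ U) (hUG : IsGSymm u U)
    (N : ℕ)
    (hempty : thickBd (2 * N * lam) A ∩ thickBd (2 * N * lam + ξ) B = ∅)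
    (rest : List (List ((Matrix (Λ → Fin d) (Λ → Fin d) ℂ) × Λ)))
    (hrest_u : ∀ L ∈ rest, ∀ p ∈ L, IsUnitaryMat p.1)
    (hrest_g : ∀ L ∈ rest, ∀ p ∈ L, IsGSymm u p.1)
    (hrest_s : ∀ L ∈ rest, ∀ p ∈ L, SupportedOn (Metric.closedBall p.2 lam) p.1)
    (hrest_d : ∀ L ∈ rest, L.Pairwise fun p q =>
      Disjoint (Metric.closedBall p.2 lam) (Metric.closedBall q.2 lam))
    (hlen : rest.length + 1 ≤ N) :
    ∀ g : List ((Matrix (Λ → Fin d) (Λ → Fin d) ℂ) × Λ),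
      (∀ p ∈ g, IsUnitaryMat p.1) → (∀ p ∈ g, IsGSymm u p.1) →
      (∀ p ∈ g, SupportedOn (Metric.closedBall p.2 lam) p.1) →
      (g.Pairwise fun p q =>
        Disjoint (Metric.closedBall p.2 lam) (Metric.closedBall q.2 lam)) →
      Ω A B ((g.map Prod.fst).prod *
          ((rest.map fun L => (L.map Prod.fst).prod).prod * U)) =
        Ω A B ((rest.map fun L => (L.map Prod.fst).prod).prod * U) := by
  have hRu : IsUnitaryMat (rest.map fun L => (L.map Prod.fst).prod).prod := by
    refine isUnitaryMat_listProd _ fun M hM => ?_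
    rw [List.mem_map] at hM
    obtain ⟨L, hL, rfl⟩ := hM
    refine isUnitaryMat_listProd _ fun M' hM' => ?_
    rw [List.mem_map] at hM'
    obtain ⟨q, hq, rfl⟩ := hM'
    exact hrest_u L hL q hq
  have hRg : IsGSymm u (rest.map fun L => (L.map Prod.fst).prod).prod := by
    refine isGSymm_listProd _ fun M hM => ?_
    rw [List.mem_map] at hM
    obtain ⟨L, hL, rfl⟩ := hM
    refine isGSymm_listProd _ fun M' hM' => ?_
    rw [List.mem_map] at hM'
    obtain ⟨q, hq, rfl⟩ := hM'
    exact hrest_g L hL q hq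
  have h1N : 1 ≤ N := le_trans (Nat.le_add_left 1 rest.length) hlen
  have h1NR : (1 : ℝ) ≤ (N : ℝ) := by exact_mod_cast h1N
  have hrlen : (rest.length : ℝ) + 1 ≤ (N : ℝ) := by exact_mod_cast hlen
  intro g
  induction g with
  | nil =>
    intro _ _ _ _
    rw [List.map_nil, List.prod_nil, one_mul]
  | cons p t ih =>
    intro hgu hgg hgs hgd
    set R : Matrix (Λ → Fin d) (Λ → Fin d) ℂ :=
      (rest.map fun L => (L.map Prod.fst).prod).prod with hR
    set tp : Matrix (Λ → Fin d) (Λ → Fin d) ℂ := (t.map Prod.fst).prod with htp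
    set X : Matrix (Λ → Fin d) (Λ → Fin d) ℂ := tp * (R * U) with hX
    have hpu : IsUnitaryMat p.1 := hgu p ((List.mem_cons_self (a := p) (l := t)))
    have hpg : IsGSymm u p.1 := hgg p ((List.mem_cons_self (a := p) (l := t)))
    have hps : SupportedOn (Metric.closedBall p.2 lam) p.1 := hgs p ((List.mem_cons_self (a := p) (l := t)))
    have htu : ∀ q ∈ t, IsUnitaryMat q.1 := fun q hq => hgu q (List.mem_cons_of_mem p hq)
    have htg : ∀ q ∈ t, IsGSymm u q.1 := fun q hq => hgg q (List.mem_cons_of_mem p hq)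
    have hts : ∀ q ∈ t, SupportedOn (Metric.closedBall q.2 lam) q.1 :=
      fun q hq => hgs q (List.mem_cons_of_mem p hq)
    have htd := (List.pairwise_cons.mp hgd).2
    have hhead := (List.pairwise_cons.mp hgd).1
    have htpu : IsUnitaryMat tp := by
      refine isUnitaryMat_listProd _ fun M hM => ?_
      rw [List.mem_map] at hM
      obtain ⟨q, hq, rfl⟩ := hM
      exact htu q hq
    have htpg : IsGSymm u tp := by
      refine isGSymm_listProd _ fun M hM => ?_
      rw [List.mem_map] at hM
      obtain ⟨q, hq, rfl⟩ := hM
      exact htg q hq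
    have hXu : IsUnitaryMat X := htpu.mul (hRu.mul hU.1)
    have hXg : IsGSymm u X := htpg.mul (hRg.mul hUG)
    have e1 : ((p :: t).map Prod.fst).prod * (R * U) = p.1 * X := by
      rw [List.map_cons, List.prod_cons, hX, mul_assoc]
    have ihres := ih htu htg hts htd
    by_cases hA1 : Metric.closedBall p.2 lam ⊆ A
    · rw [e1, hΩ1 A B X p.1 hXu hXg hpu hpg (Or.inl (supportedOn_mono hA1 hps))]
      exact ihres
    · by_cases hA2 : Metric.closedBall p.2 lam ⊆ Aᶜ
      · rw [e1, hΩ1 A B X p.1 hXu hXg hpu hpg (Or.inr (supportedOn_mono hA2 hps))]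
        exact ihres
      · -- straddling gate
        obtain ⟨s1, hs1b, hs1⟩ := Set.not_subset.mp hA1
        obtain ⟨s2, hs2b, hs2⟩ := Set.not_subset.mp hA2
        have hs2A : s2 ∈ A := Set.not_notMem.mp (fun h => hs2 h)
        have hllN : lam ≤ 2 * N * lam := by nlinarith
        have hcA : p.2 ∈ thickBd (2 * N * lam) A := by
          refine ⟨⟨s2, hs2A, ?_⟩, ⟨s1, hs1, ?_⟩⟩
          · rw [dist_comm]
            exact le_trans (Metric.mem_closedBall.mp hs2b) hllN
          · rw [dist_comm]
            exact le_trans (Metric.mem_closedBall.mp hs1b) hllN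
        have hnotB : p.2 ∉ thickBd (2 * N * lam + ξ) B := by
          intro hB
          exact Set.eq_empty_iff_forall_notMem.mp hempty p.2 ⟨hcA, hB⟩
        set Q : Matrix (Λ → Fin d) (Λ → Fin d) ℂ := Xᴴ * p.1 * X with hQ
        have hQu : IsUnitaryMat Q := hpu.conj hXu
        have hQg : IsGSymm u Q := hpg.conj hXg hXu
        have e2 : p.1 * X = X * Q := by
          rw [hQ]
          refine Eq.symm ?_
          calc X * (Xᴴ * p.1 * X) = X * Xᴴ * (p.1 * X) := by noncomm_ring
            _ = p.1 * X := by rw [hXu.2, one_mul]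
        -- support of Q
        have hM1 : SupportedOn (Metric.closedBall p.2 lam) (tpᴴ * p.1 * tp) := by
          have := conj_layer lam t htu hts htd (Metric.closedBall p.2 lam) p.1 hps
          refine supportedOn_mono ?_ this
          rintro x (hx | ⟨q, hq, hnd, hx⟩)
          · exact hx
          · exact absurd (hhead q hq).symm hnd
        have hM2 : SupportedOn (Metric.closedBall p.2 (lam + 2 * rest.length * lam))
            (Rᴴ * (tpᴴ * p.1 * tp) * R) :=
          conj_layers lam hlam rest hrest_u hrest_s hrest_d p.2 lam _ hM1
        have hQeq : Q = Uᴴ * (Rᴴ * (tpᴴ * p.1 * tp) * R) * U := by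
          rw [hQ, hX]
          simp only [Matrix.conjTranspose_mul, Matrix.mul_assoc]
        have hradius : lam + 2 * (rest.length : ℝ) * lam + ξ ≤ 2 * N * lam + ξ := by
          nlinarith
        have hQBsupp : (SupportedOn B Q ∨ SupportedOn Bᶜ Q) := by
          rcases not_and_or.mp hnotB with hc1 | hc2
          · right
            rw [hQeq]
            refine conj_lpu hd0 hU hM2 ?_
            intro r hr z hz hzB
            refine hc1 ⟨z, hzB, ?_⟩
            calc dist p.2 z ≤ dist p.2 r + dist r z := dist_triangle p.2 r z
              _ ≤ (lam + 2 * rest.length * lam) + ξ := by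
                  refine add_le_add ?_ ?_
                  · rw [dist_comm]; exact Metric.mem_closedBall.mp hr
                  · rw [dist_comm]; exact Metric.mem_closedBall.mp hz
              _ ≤ 2 * N * lam + ξ := hradius
          · left
            rw [hQeq]
            refine conj_lpu hd0 hU hM2 ?_
            intro r hr z hz
            by_contra hzB
            refine hc2 ⟨z, hzB, ?_⟩
            calc dist p.2 z ≤ dist p.2 r + dist r z := dist_triangle p.2 r z
              _ ≤ (lam + 2 * rest.length * lam) + ξ := by
                  refine add_le_add ?_ ?_
                  · rw [dist_comm]; exact Metric.mem_closedBall.mp hr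
                  · rw [dist_comm]; exact Metric.mem_closedBall.mp hz
              _ ≤ 2 * N * lam + ξ := hradius
        rw [e1, e2, hΩ2 A B X Q hXu hXg hQu hQg hQBsupp]
        exact ihres

lemma peel_layers
    (hd0 : 0 < d)
    (Ω : Set Λ → Set Λ → Matrix (Λ → Fin d) (Λ → Fin d) ℂ → ℝ)
    (hΩ1 : ∀ (A B : Set Λ) (U V : Matrix (Λ → Fin d) (Λ → Fin d) ℂ),
      IsUnitaryMat U → IsGSymm u U → IsUnitaryMat V → IsGSymm u V →
      (SupportedOn A V ∨ SupportedOn Aᶜ V) → Ω A B (V * U) = Ω A B U)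
    (hΩ2 : ∀ (A B : Set Λ) (U V : Matrix (Λ → Fin d) (Λ → Fin d) ℂ),
      IsUnitaryMat U → IsGSymm u U → IsUnitaryMat V → IsGSymm u V →
      (SupportedOn B V ∨ SupportedOn Bᶜ V) → Ω A B (U * V) = Ω A B U)
    (A B : Set Λ) (ξ lam : ℝ) (hξ : 0 ≤ ξ) (hlam : 0 ≤ lam)
    (U : Matrix (Λ → Fin d) (Λ → Fin d) ℂ) (hU : IsStrictLPU ξ U) (hUG : IsGSymm u U)
    (N : ℕ)
    (hempty : thickBd (2 * N * lam) A ∩ thickBd (2 * N * lam + ξ) B = ∅) :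
    ∀ LL : List (List ((Matrix (Λ → Fin d) (Λ → Fin d) ℂ) × Λ)),
      (∀ L ∈ LL, ∀ p ∈ L, IsUnitaryMat p.1) →
      (∀ L ∈ LL, ∀ p ∈ L, IsGSymm u p.1) →
      (∀ L ∈ LL, ∀ p ∈ L, SupportedOn (Metric.closedBall p.2 lam) p.1) →
      (∀ L ∈ LL, L.Pairwise fun p q =>
        Disjoint (Metric.closedBall p.2 lam) (Metric.closedBall q.2 lam)) →
      LL.length ≤ N →
      Ω A B ((LL.map fun L => (L.map Prod.fst).prod).prod * U) = Ω A B U := by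
  intro LL
  induction LL with
  | nil =>
    intro _ _ _ _ _
    rw [List.map_nil, List.prod_nil, one_mul]
  | cons L t ih =>
    intro hu hg hs hdisj hlen
    rw [List.length_cons] at hlen
    have htu : ∀ L' ∈ t, ∀ p ∈ L', IsUnitaryMat p.1 :=
      fun L' hL' => hu L' (List.mem_cons_of_mem L hL')
    have htg : ∀ L' ∈ t, ∀ p ∈ L', IsGSymm u p.1 :=
      fun L' hL' => hg L' (List.mem_cons_of_mem L hL')
    have hts : ∀ L' ∈ t, ∀ p ∈ L', SupportedOn (Metric.closedBall p.2 lam) p.1 :=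
      fun L' hL' => hs L' (List.mem_cons_of_mem L hL')
    have htd : ∀ L' ∈ t, L'.Pairwise fun p q =>
        Disjoint (Metric.closedBall p.2 lam) (Metric.closedBall q.2 lam) :=
      fun L' hL' => hdisj L' (List.mem_cons_of_mem L hL')
    rw [List.map_cons, List.prod_cons, mul_assoc]
    rw [peel_gates hd0 Ω hΩ1 hΩ2 A B ξ lam hξ hlam U hU hUG N hempty t htu htg hts htd hlen
      L (hu L ((List.mem_cons_self (a := L) (l := t)))) (hg L ((List.mem_cons_self (a := L) (l := t))))
      (hs L ((List.mem_cons_self (a := L) (l := t)))) (hdisj L ((List.mem_cons_self (a := L) (l := t))))]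
    exact ih htu htg hts htd (le_trans (Nat.le_succ _) hlen)

end Main
/-- Corollary 1: if `(∂_{2nλ}A) ∩ (∂_{2nλ+ξ}B) = ∅` then `Ω_{A,B}(W·U) = Ω_{A,B}(U)` for any
`G`-symmetric FDLU `W` of depth `n` and radius `λ` and any `G`-symmetric strict LPU `U`
with operator spreading length `ξ`. -/
theorem flow_removal_FDLU
    {Λ : Type*} [Fintype Λ] [DecidableEq Λ] [MetricSpace Λ]
    {d : ℕ} (hd : 1 ≤ d) {G : Type*} [Group G]
    (u : G → Matrix (Fin d) (Fin d) ℂ)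
    (hu_unit : ∀ g, IsUnitaryMat (u g))
    (hu_mul : ∀ g h, u (g * h) = u g * u h)
    (Ω : Set Λ → Set Λ → Matrix (Λ → Fin d) (Λ → Fin d) ℂ → ℝ)
    -- flow property (1)
    (hΩ1 : ∀ (A B : Set Λ) (U V : Matrix (Λ → Fin d) (Λ → Fin d) ℂ),
      IsUnitaryMat U → IsGSymm u U → IsUnitaryMat V → IsGSymm u V →
      (SupportedOn A V ∨ SupportedOn Aᶜ V) → Ω A B (V * U) = Ω A B U)
    -- flow property (2)
    (hΩ2 : ∀ (A B : Set Λ) (U V : Matrix (Λ → Fin d) (Λ → Fin d) ℂ),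
      IsUnitaryMat U → IsGSymm u U → IsUnitaryMat V → IsGSymm u V →
      (SupportedOn B V ∨ SupportedOn Bᶜ V) → Ω A B (U * V) = Ω A B U)
    (A B : Set Λ) (ξ lam : ℝ) (hξ : 0 ≤ ξ) (hlam : 0 ≤ lam)
    -- `U` is a `G`-symmetric strict LPU with operator spreading length `ξ`
    (U : Matrix (Λ → Fin d) (Λ → Fin d) ℂ)
    (hU : IsStrictLPU ξ U) (hUG : IsGSymm u U)
    -- the gates of the `G`-symmetric FDLU `W` of depth `n` and radius `lam`
    (n : ℕ) (m : Fin n → ℕ) (c : (i : Fin n) → Fin (m i) → Λ)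
    (V : (i : Fin n) → Fin (m i) → Matrix (Λ → Fin d) (Λ → Fin d) ℂ)
    (hVunit : ∀ i j, IsUnitaryMat (V i j))
    (hVG : ∀ i j, IsGSymm u (V i j))
    (hVsupp : ∀ i j, SupportedOn (Metric.closedBall (c i j) lam) (V i j))
    (hVdisj : ∀ i (j j' : Fin (m i)), j ≠ j' →
      Disjoint (Metric.closedBall (c i j) lam) (Metric.closedBall (c i j') lam))
    -- the two thickened boundaries do not intersect
    (hempty : thickBd (2 * n * lam) A ∩ thickBd (2 * n * lam + ξ) B = ∅) :
    Ω A B ((List.ofFn (fun i : Fin n => (List.ofFn (V i.rev)).prod)).prod * U) =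
      Ω A B U := by
  classical
  set LL : List (List ((Matrix (Λ → Fin d) (Λ → Fin d) ℂ) × Λ)) :=
    List.ofFn (fun i : Fin n => List.ofFn (fun j => (V i.rev j, c i.rev j))) with hLL
  have hgoal : (List.ofFn fun i : Fin n => (List.ofFn (V i.rev)).prod)
      = LL.map fun L => (L.map Prod.fst).prod := by
    rw [hLL, List.map_ofFn]
    refine congrArg List.ofFn ?_
    funext i
    rw [Function.comp_apply, List.map_ofFn]
    rfl
  rw [hgoal]
  refine peel_layers hd Ω hΩ1 hΩ2 A B ξ lam hξ hlam U hU hUG n hempty LL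
    ?_ ?_ ?_ ?_ ?_
  · intro L hL p hp
    obtain ⟨i, rfl⟩ := Set.mem_range.mp ((List.mem_ofFn' _ _).mp hL)
    obtain ⟨j, rfl⟩ := Set.mem_range.mp ((List.mem_ofFn' _ _).mp hp)
    exact hVunit _ j
  · intro L hL p hp
    obtain ⟨i, rfl⟩ := Set.mem_range.mp ((List.mem_ofFn' _ _).mp hL)
    obtain ⟨j, rfl⟩ := Set.mem_range.mp ((List.mem_ofFn' _ _).mp hp)
    exact hVG _ j
  · intro L hL p hp
    obtain ⟨i, rfl⟩ := Set.mem_range.mp ((List.mem_ofFn' _ _).mp hL)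
    obtain ⟨j, rfl⟩ := Set.mem_range.mp ((List.mem_ofFn' _ _).mp hp)
    exact hVsupp _ j
  · intro L hL
    obtain ⟨i, rfl⟩ := Set.mem_range.mp ((List.mem_ofFn' _ _).mp hL)
    rw [List.pairwise_ofFn]
    intro j j' hjj'
    exact hVdisj _ j j' (ne_of_lt hjj')
  · rw [hLL, List.length_ofFn]
end

section
/- (Theorem 1.2) Fix d ≥ 1 and an onsite symmetry (G, u). Let Ω be a flow: an assignment, to every finite type Λ' of sites, subsets A, B ⊆ Λ', and G-symmetric unitary U on ι(Λ') = Λ' → Fin d, of a real number Ω^{Λ'}_{A,B}(U), satisfying properties (1)–(4) of a flow. Let Λ be a finite metric space of sites and U a G-symmetric strict LPU on Λ with operator spreading length ξ. Then: (i) for every a ∈ A with a ∉ ∂_{4ξ} B, Ω^Λ_{A,B}(U) = Ω^Λ_{A∖{a},B}(U); and (ii) for every b ∈ B with b ∉ ∂_{4ξ} A, Ω^Λ_{A,B}(U) = Ω^Λ_{A,B∖{b}}(U). -/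
open Matrix

/-- A flow: an assignment, to every finite lattice `Λ'`, subsets `A, B ⊆ Λ'` and
`G`-symmetric unitary `U` on `Λ' → Fin d`, of a real number `Ω^{Λ'}_{A,B}(U)`, satisfying
the four defining properties of Definition 1. -/
structure LatticeFlow (d : ℕ) (G : Type) [Group G] (u : G → Matrix (Fin d) (Fin d) ℂ) where
  omega : (Λ' : Type) → [Fintype Λ'] → [DecidableEq Λ'] → Set Λ' → Set Λ' →
    Matrix (Λ' → Fin d) (Λ' → Fin d) ℂ → ℝ
  /-- (1): invariance under left multiplication by `G`-symmetric unitaries supported on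
  `A` or on its complement. -/
  left_inv : ∀ (Λ' : Type) [Fintype Λ'] [DecidableEq Λ'] (A B : Set Λ')
    (U V : Matrix (Λ' → Fin d) (Λ' → Fin d) ℂ),
    IsUnitaryMat U → IsGSymm u U → IsUnitaryMat V → IsGSymm u V →
    (SupportedOn A V ∨ SupportedOn Aᶜ V) →
    omega Λ' A B (V * U) = omega Λ' A B U
  /-- (2): invariance under right multiplication by `G`-symmetric unitaries supported on
  `B` or on its complement. -/
  right_inv : ∀ (Λ' : Type) [Fintype Λ'] [DecidableEq Λ'] (A B : Set Λ')
    (U V : Matrix (Λ' → Fin d) (Λ' → Fin d) ℂ),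
    IsUnitaryMat U → IsGSymm u U → IsUnitaryMat V → IsGSymm u V →
    (SupportedOn B V ∨ SupportedOn Bᶜ V) →
    omega Λ' A B (U * V) = omega Λ' A B U
  /-- (3): additivity under stacking (disjoint-union lattices and Kronecker products). -/
  stacking : ∀ (Λ₁ Λ₂ : Type) [Fintype Λ₁] [DecidableEq Λ₁] [Fintype Λ₂] [DecidableEq Λ₂]
    (A₁ B₁ : Set Λ₁) (A₂ B₂ : Set Λ₂)
    (U₁ : Matrix (Λ₁ → Fin d) (Λ₁ → Fin d) ℂ) (U₂ : Matrix (Λ₂ → Fin d) (Λ₂ → Fin d) ℂ),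
    IsUnitaryMat U₁ → IsGSymm u U₁ → IsUnitaryMat U₂ → IsGSymm u U₂ →
    omega (Λ₁ ⊕ Λ₂) (Sum.inl '' A₁ ∪ Sum.inr '' A₂) (Sum.inl '' B₁ ∪ Sum.inr '' B₂)
      (Matrix.reindex (Equiv.sumArrowEquivProdArrow Λ₁ Λ₂ (Fin d)).symm
        (Equiv.sumArrowEquivProdArrow Λ₁ Λ₂ (Fin d)).symm
        (Matrix.kroneckerMap (· * ·) U₁ U₂)) =
      omega Λ₁ A₁ B₁ U₁ + omega Λ₂ A₂ B₂ U₂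
  /-- (4): normalization `Ω_{A,B}(𝟙) = 0`. -/
  norm_one : ∀ (Λ' : Type) [Fintype Λ'] [DecidableEq Λ'] (A B : Set Λ'),
    omega Λ' A B 1 = 0

set_option linter.unusedSectionVars false
open scoped Classical


namespace Aux

variable {Γ : Type*} [Fintype Γ] [DecidableEq Γ] {d : ℕ}

abbrev Mat (Γ : Type*) (d : ℕ) := Matrix (Γ → Fin d) (Γ → Fin d) ℂ

theorem supportedOn_mono {S T : Set Γ} (h : S ⊆ T) {M : Mat Γ d}
    (hM : SupportedOn S M) : SupportedOn T M := by
  constructor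
  · rintro x y ⟨r, hr, hne⟩
    exact hM.1 x y ⟨r, fun hS => hr (h hS), hne⟩
  · intro x y x' y' hx hy hxy hxy'
    by_cases hc : ∀ r, r ∉ S → x r = y r
    · refine hM.2 x y x' y' (fun r hr => hx r (h hr)) (fun r hr => hy r (h hr)) hc ?_
      intro r hr
      by_cases hrT : r ∈ T
      · rw [← hx r hrT, ← hy r hrT]; exact hc r hr
      · exact hxy' r hrT
    · push_neg at hc
      obtain ⟨r, hrS, hne⟩ := hc
      have hrT : r ∈ T := by
        by_contra hrT
        exact hne (hxy r hrT)
      have hne' : x' r ≠ y' r := by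
        rw [← hx r hrT, ← hy r hrT]; exact hne
      rw [hM.1 x y ⟨r, hrS, hne⟩, hM.1 x' y' ⟨r, hrS, hne'⟩]

theorem supportedOn_one (S : Set Γ) : SupportedOn S (1 : Mat Γ d) := by
  constructor
  · rintro x y ⟨r, _, hne⟩
    exact Matrix.one_apply_ne (fun h => hne (congrFun h r))
  · intro x y x' y' hx hy hxy hxy'
    have : x = y ↔ x' = y' := by
      constructor
      · intro h; funext r
        by_cases hr : r ∈ S
        · rw [← hx r hr, ← hy r hr]; exact congrFun h r
        · exact hxy' r hr
      · intro h; funext r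
        by_cases hr : r ∈ S
        · rw [hx r hr, hy r hr]; exact congrFun h r
        · exact hxy r hr
    simp only [Matrix.one_apply]
    split_ifs with h1 h2 h2 <;> tauto

theorem supportedOn_smul {S : Set Γ} {M : Mat Γ d} (c : ℂ)
    (hM : SupportedOn S M) : SupportedOn S (c • M) := by
  constructor
  · intro x y h; simp [hM.1 x y h]
  · intro x y x' y' hx hy hxy hxy'
    simp [Matrix.smul_apply, hM.2 x y x' y' hx hy hxy hxy']

theorem supportedOn_sum {S : Set Γ} {α : Type*} (F : Finset α) (f : α → Mat Γ d)
    (hf : ∀ i ∈ F, SupportedOn S (f i)) : SupportedOn S (∑ i ∈ F, f i) := by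
  constructor
  · intro x y h
    simp only [Matrix.sum_apply]
    exact Finset.sum_eq_zero fun i hi => (hf i hi).1 x y h
  · intro x y x' y' hx hy hxy hxy'
    simp only [Matrix.sum_apply]
    exact Finset.sum_congr rfl fun i hi => (hf i hi).2 x y x' y' hx hy hxy hxy'

theorem supportedOn_mul {S : Set Γ} {M N : Mat Γ d}
    (hM : SupportedOn S M) (hN : SupportedOn S N) : SupportedOn S (M * N) := by
  constructor
  · rintro x y ⟨r, hr, hne⟩
    rw [Matrix.mul_apply]
    apply Finset.sum_eq_zero
    intro z _
    by_cases hz : x r = z r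
    · have : z r ≠ y r := by rw [← hz]; exact hne
      rw [hN.1 z y ⟨r, hr, this⟩, mul_zero]
    · rw [hM.1 x z ⟨r, hr, hz⟩, zero_mul]
  · intro x y x' y' hx hy hxy hxy'
    rw [Matrix.mul_apply, Matrix.mul_apply]
    set φ : (Γ → Fin d) ≃ (Γ → Fin d) :=
      Equiv.piCongrRight (fun t => if t ∈ S then Equiv.refl (Fin d) else Equiv.swap (x t) (x' t)) with hφ
    rw [← Equiv.sum_comp φ (fun z => M x' z * N z y')]
    apply Finset.sum_congr rfl
    intro z _
    have hφz : ∀ t, φ z t = if t ∈ S then z t else Equiv.swap (x t) (x' t) (z t) := by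
      intro t
      simp only [hφ, Equiv.piCongrRight_apply, Pi.map_apply]
      split_ifs with ht <;> simp [ht]
    by_cases hzx : ∀ t, t ∉ S → z t = x t
    · -- good terms
      have hφz' : ∀ t, t ∉ S → φ z t = x' t := by
        intro t ht
        rw [hφz t, if_neg ht, hzx t ht, Equiv.swap_apply_left]
      have hφzS : ∀ t ∈ S, z t = φ z t := by
        intro t ht; rw [hφz t, if_pos ht]
      have hφzS' : ∀ t ∈ S, φ z t = z t := fun t ht => (hφzS t ht).symm
      have h1 : M x z = M x' (φ z) :=
        hM.2 x z x' (φ z) hx hφzS (fun t ht => (hzx t ht).symm)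
          (fun t ht => (hφz' t ht).symm)
      have h2 : N z y = N (φ z) y' :=
        hN.2 z y (φ z) y' hφzS hy
          (fun t ht => (hzx t ht).trans (hxy t ht))
          (fun t ht => (hφz' t ht).trans (hxy' t ht))
      rw [h1, h2]
    · push_neg at hzx
      obtain ⟨t, ht, hne⟩ := hzx
      have h1 : M x z = 0 := hM.1 x z ⟨t, ht, fun h => hne h.symm⟩
      have h2 : M x' (φ z) = 0 := by
        apply hM.1 x' (φ z)
        refine ⟨t, ht, fun h => ?_⟩
        rw [hφz t, if_neg ht] at h
        have h2 : Equiv.swap (x t) (x' t) (z t) = Equiv.swap (x t) (x' t) (x t) := by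
          rw [← h, Equiv.swap_apply_left]
        exact hne ((Equiv.swap (x t) (x' t)).injective h2)
      rw [h1, h2, zero_mul, zero_mul]


def Emat (s : Γ) (i j : Fin d) : Mat Γ d :=
  Matrix.of fun x y => if x s = i ∧ y s = j ∧ ∀ t, t ≠ s → x t = y t then 1 else 0

theorem supportedOn_Emat (s : Γ) (i j : Fin d) : SupportedOn {s} (Emat s i j) := by
  constructor
  · rintro x y ⟨r, hr, hne⟩
    simp only [Set.mem_singleton_iff] at hr
    simp only [Emat, Matrix.of_apply, ite_eq_right_iff]
    intro ⟨_, _, h3⟩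
    exact absurd (h3 r hr) hne
  · intro x y x' y' hx hy hxy hxy'
    simp only [Set.mem_singleton_iff, forall_eq] at hx hy
    simp only [Set.mem_singleton_iff] at hxy hxy'
    simp only [Emat, Matrix.of_apply]
    have : (x s = i ∧ y s = j ∧ ∀ t, t ≠ s → x t = y t) ↔
        (x' s = i ∧ y' s = j ∧ ∀ t, t ≠ s → x' t = y' t) := by
      rw [hx, hy]
      refine and_congr_right fun _ => and_congr_right fun _ => ?_
      exact ⟨fun h t ht => hxy' t ht, fun h t ht => hxy t ht⟩
    rw [if_congr this rfl rfl]

theorem mul_Emat_apply (M : Mat Γ d) (s : Γ) (i j : Fin d) (x y : Γ → Fin d) :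
    (M * Emat s i j) x y = if y s = j then M x (Function.update y s i) else 0 := by
  rw [Matrix.mul_apply]
  have key : ∀ z, M x z * Emat s i j z y
      = if y s = j then (if z = Function.update y s i then M x z else 0) else 0 := by
    intro z
    simp only [Emat, Matrix.of_apply]
    by_cases h1 : y s = j
    · by_cases h2 : z = Function.update y s i
      · subst h2
        rw [if_pos h1, if_pos, mul_one, if_pos rfl]
        exact ⟨Function.update_self s i y, h1, fun t ht => Function.update_of_ne ht i y⟩
      · rw [if_pos h1, if_neg h2, if_neg, mul_zero]
        rintro ⟨hz1, _, hz3⟩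
        apply h2
        funext t
        by_cases ht : t = s
        · subst ht; rw [Function.update_self, hz1]
        · rw [Function.update_of_ne ht]; exact hz3 t ht
    · rw [if_neg h1, if_neg, mul_zero]
      rintro ⟨_, hz2, _⟩
      exact h1 hz2
  rw [Finset.sum_congr rfl fun z _ => key z]
  by_cases h1 : y s = j
  · simp only [if_pos h1]
    rw [Finset.sum_ite_eq' Finset.univ (Function.update y s i) (fun z => M x z)]
    simp
  · simp [h1]

theorem Emat_mul_apply (M : Mat Γ d) (s : Γ) (i j : Fin d) (x y : Γ → Fin d) :
    (Emat s i j * M) x y = if x s = i then M (Function.update x s j) y else 0 := by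
  rw [Matrix.mul_apply]
  have key : ∀ z, Emat s i j x z * M z y
      = if x s = i then (if z = Function.update x s j then M z y else 0) else 0 := by
    intro z
    simp only [Emat, Matrix.of_apply]
    by_cases h1 : x s = i
    · by_cases h2 : z = Function.update x s j
      · subst h2
        rw [if_pos h1, if_pos, one_mul, if_pos rfl]
        exact ⟨h1, Function.update_self s j x, fun t ht => (Function.update_of_ne ht j x).symm⟩
      · rw [if_pos h1, if_neg h2, if_neg, zero_mul]
        rintro ⟨_, hz2, hz3⟩
        apply h2
        funext t
        by_cases ht : t = s
        · subst ht; rw [Function.update_self, hz2]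
        · rw [Function.update_of_ne ht]; exact (hz3 t ht).symm
    · rw [if_neg h1, if_neg, zero_mul]
      rintro ⟨hz1, _, _⟩
      exact h1 hz1
  rw [Finset.sum_congr rfl fun z _ => key z]
  by_cases h1 : x s = i
  · simp only [if_pos h1]
    rw [Finset.sum_ite_eq' Finset.univ (Function.update x s j) (fun z => M z y)]
    simp
  · simp [h1]

theorem supportedOn_of_commute {S : Set Γ} {M : Mat Γ d}
    (hcomm : ∀ s ∉ S, ∀ O : Mat Γ d, SupportedOn {s} O → M * O = O * M) :
    SupportedOn S M := by
  have R : ∀ s ∉ S, ∀ (i j : Fin d) (x y : Γ → Fin d),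
      (if y s = j then M x (Function.update y s i) else 0)
      = if x s = i then M (Function.update x s j) y else 0 := by
    intro s hs i j x y
    have h := hcomm s hs (Emat s i j) (supportedOn_Emat s i j)
    have := congrFun (congrFun h x) y
    rwa [mul_Emat_apply, Emat_mul_apply] at this
  have vanish : ∀ x y : Γ → Fin d, ∀ s ∉ S, x s ≠ y s → M x y = 0 := by
    intro x y s hs hne
    have h := R s hs (y s) (y s) x y
    rw [if_pos rfl, Function.update_eq_self, if_neg hne] at h
    exact h
  have star' : ∀ s ∉ S, ∀ (x y : Γ → Fin d) (i : Fin d),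
      M x (Function.update y s i) = if x s = i then M (Function.update x s (y s)) y else 0 := by
    intro s hs x y i
    have h := R s hs i (y s) x y
    rwa [if_pos rfl] at h
  have move : ∀ s ∉ S, ∀ (x y : Γ → Fin d) (k : Fin d), x s = y s →
      M (Function.update x s k) (Function.update y s k) = M x y := by
    intro s hs x y k hxy
    have h := star' s hs (Function.update x s k) y k
    rw [if_pos (Function.update_self s k x), Function.update_idem] at h
    rw [h, ← hxy, Function.update_eq_self]
  constructor
  · intro x y ⟨r, hr, hne⟩
    exact vanish x y r hr hne
  · intro x y x' y' hx hy hxy hxy'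
    have key : ∀ F : Finset Γ, (∀ t ∈ F, t ∉ S) →
        M (F.piecewise x' x) (F.piecewise y' y) = M x y := by
      intro F
      induction F using Finset.induction_on with
      | empty => simp
      | @insert s F hsF IH =>
        intro hF
        have hs : s ∉ S := hF s (Finset.mem_insert_self s F)
        rw [Finset.piecewise_insert, Finset.piecewise_insert]
        have hval : (F.piecewise x' x) s = (F.piecewise y' y) s := by
          rw [Finset.piecewise_eq_of_notMem _ _ _ hsF, Finset.piecewise_eq_of_notMem _ _ _ hsF]
          exact hxy s hs
        have hxy's : x' s = y' s := hxy' s hs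
        rw [hxy's]
        rw [move s hs _ _ (y' s) hval]
        exact IH fun t ht => hF t (Finset.mem_insert_of_mem ht)
    have hF := key (Finset.univ.filter (· ∉ S)) (fun t ht => (Finset.mem_filter.mp ht).2)
    have hx'eq : (Finset.univ.filter (· ∉ S)).piecewise x' x = x' := by
      funext t
      by_cases ht : t ∈ S
      · rw [Finset.piecewise_eq_of_notMem]
        · exact hx t ht
        · simp [ht]
      · rw [Finset.piecewise_eq_of_mem]
        simp [ht]
    have hy'eq : (Finset.univ.filter (· ∉ S)).piecewise y' y = y' := by
      funext t
      by_cases ht : t ∈ S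
      · rw [Finset.piecewise_eq_of_notMem]
        · exact hy t ht
        · simp [ht]
      · rw [Finset.piecewise_eq_of_mem]
        simp [ht]
    rw [hx'eq, hy'eq] at hF
    exact hF.symm

theorem commute_of_disjoint {S T : Set Γ} {M N : Mat Γ d}
    (hM : SupportedOn S M) (hN : SupportedOn T N) (hST : ∀ t ∈ S, t ∉ T) :
    M * N = N * M := by
  have collapse : ∀ (P Q : Mat Γ d) (S' T' : Set Γ), SupportedOn S' P → SupportedOn T' Q →
      (∀ t ∈ S', t ∉ T') → ∀ x y, (P * Q) x y =
        P x (fun t => if t ∈ S' then y t else x t) * Q (fun t => if t ∈ S' then y t else x t) y := by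
    intro P Q S' T' hP hQ hd x y
    rw [Matrix.mul_apply]
    apply Finset.sum_eq_single
    · intro z _ hz
      have : ∃ t, z t ≠ (fun t => if t ∈ S' then y t else x t) t := by
        by_contra hc
        push_neg at hc
        exact hz (funext hc)
      obtain ⟨t, htne⟩ := this
      have htne2 : z t ≠ (if t ∈ S' then y t else x t) := htne
      by_cases ht : t ∈ S'
      · rw [if_pos ht] at htne2
        rw [hQ.1 z y ⟨t, hd t ht, htne2⟩, mul_zero]
      · rw [if_neg ht] at htne2
        rw [hP.1 x z ⟨t, ht, fun h => htne2 h.symm⟩, zero_mul]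
    · intro h
      exact absurd (Finset.mem_univ _) h
  have e1 := collapse M N S T hM hN hST
  have e2 := collapse N M T S hN hM (fun t ht hS => hST t hS ht)
  ext x y
  rw [e1 x y, e2 x y]
  set zs : Γ → Fin d := fun t => if t ∈ S then y t else x t with hzs
  set ws : Γ → Fin d := fun t => if t ∈ T then y t else x t with hws
  have hzsv : ∀ t, zs t = if t ∈ S then y t else x t := fun t => rfl
  have hwsv : ∀ t, ws t = if t ∈ T then y t else x t := fun t => rfl
  by_cases hxy : ∀ t, t ∉ S → t ∉ T → x t = y t
  · have h1 : M x zs = M ws y := by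
      apply hM.2
      · intro r hr
        rw [hwsv r, if_neg (hST r hr)]
      · intro r hr
        rw [hzsv r, if_pos hr]
      · intro r hr
        rw [hzsv r, if_neg hr]
      · intro r hr
        rw [hwsv r]
        by_cases hrT : r ∈ T
        · rw [if_pos hrT]
        · rw [if_neg hrT]
          exact hxy r hr hrT
    have h2 : N zs y = N x ws := by
      apply hN.2
      · intro r hr
        rw [hzsv r, if_neg (fun hS => hST r hS hr)]
      · intro r hr
        rw [hwsv r, if_pos hr]
      · intro r hr
        rw [hzsv r]
        by_cases hrS : r ∈ S
        · rw [if_pos hrS]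
        · rw [if_neg hrS]
          exact hxy r hrS hr
      · intro r hr
        rw [hwsv r, if_neg hr]
    rw [h1, h2]
    ring
  · push_neg at hxy
    obtain ⟨t, htS, htT, hne⟩ := hxy
    have hz : N zs y = 0 := by
      apply hN.1
      refine ⟨t, htT, ?_⟩
      rw [hzsv t, if_neg htS]
      exact hne
    have hw : M ws y = 0 := by
      apply hM.1
      refine ⟨t, htS, ?_⟩
      rw [hwsv t, if_neg htT]
      exact hne
    rw [hz, hw, mul_zero, mul_zero]

theorem eq_smul_one_of_supportedOn_empty {O : Mat Γ d} (c : Γ → Fin d)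
    (hO : SupportedOn (∅ : Set Γ) O) : O = O c c • 1 := by
  ext x y
  by_cases h : x = y
  · subst h
    have := hO.2 x x c c (fun r hr => absurd hr (Set.notMem_empty r))
      (fun r hr => absurd hr (Set.notMem_empty r)) (fun r _ => rfl) (fun r _ => rfl)
    simp [this, Matrix.one_apply]
  · have : ∃ r, x r ≠ y r := by
      by_contra hc
      push_neg at hc
      exact h (funext hc)
    obtain ⟨r, hr⟩ := this
    rw [hO.1 x y ⟨r, Set.notMem_empty r, hr⟩, Matrix.smul_apply, Matrix.one_apply_ne h,
      smul_zero]

theorem boost_finset {V : Mat Γ d} (hV : Vᴴ * V = 1 ∧ V * Vᴴ = 1) (c : Γ → Fin d)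
    (h : Γ → Set Γ)
    (hsite : ∀ (s : Γ) (O : Mat Γ d), SupportedOn {s} O → SupportedOn (h s) (Vᴴ * O * V)) :
    ∀ (F : Finset Γ) (O : Mat Γ d), SupportedOn (↑F : Set Γ) O →
      SupportedOn (⋃ s ∈ (↑F : Set Γ), h s) (Vᴴ * O * V) := by
  intro F
  induction F using Finset.induction_on with
  | empty =>
    intro O hO
    have hOeq := eq_smul_one_of_supportedOn_empty c (show SupportedOn (∅ : Set Γ) O by simpa using hO)
    rw [hOeq]
    have : Vᴴ * (O c c • 1) * V = O c c • (1 : Mat Γ d) := by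
      rw [Matrix.mul_smul, Matrix.smul_mul, Matrix.mul_one, hV.1]
    rw [this]
    exact supportedOn_smul _ (supportedOn_one _)
  | @insert r F hrF IH =>
    intro O hO
    set Q : Fin d → Fin d → Mat Γ d := fun i j =>
      Matrix.of fun x y => if x r = y r then O (Function.update x r i) (Function.update y r j) else 0
      with hQdef
    have hO' : SupportedOn (insert r (↑F : Set Γ)) O := by
      rwa [Finset.coe_insert] at hO
    have hQsupp : ∀ i j, SupportedOn (↑F : Set Γ) (Q i j) := by
      intro i j
      constructor
      · rintro x y ⟨t, ht, hne⟩
        simp only [hQdef, Matrix.of_apply]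
        by_cases htr : t = r
        · subst htr
          rw [if_neg hne]
        · split_ifs with hc
          · apply hO'.1
            refine ⟨t, ?_, ?_⟩
            · simp only [Set.mem_insert_iff]
              push_neg
              exact ⟨htr, by simpa using ht⟩
            · rw [Function.update_of_ne htr, Function.update_of_ne htr]
              exact hne
          · rfl
      · intro x y x' y' hx hy hxy hxy'
        have hrF' : r ∉ (↑F : Set Γ) := by simpa using hrF
        have hxr : x r = y r := hxy r hrF'
        have hxr' : x' r = y' r := hxy' r hrF'
        simp only [hQdef, Matrix.of_apply, if_pos hxr, if_pos hxr']
        apply hO'.2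
        · intro t ht
          rcases Set.mem_insert_iff.mp ht with h1 | h1
          · subst h1
            rw [Function.update_self, Function.update_self]
          · have htr : t ≠ r := fun h => hrF' (h ▸ h1)
            rw [Function.update_of_ne htr, Function.update_of_ne htr]
            exact hx t h1
        · intro t ht
          rcases Set.mem_insert_iff.mp ht with h1 | h1
          · subst h1
            rw [Function.update_self, Function.update_self]
          · have htr : t ≠ r := fun h => hrF' (h ▸ h1)
            rw [Function.update_of_ne htr, Function.update_of_ne htr]
            exact hy t h1
        · intro t ht
          simp only [Set.mem_insert_iff] at ht
          push_neg at ht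
          rw [Function.update_of_ne ht.1, Function.update_of_ne ht.1]
          exact hxy t ht.2
        · intro t ht
          simp only [Set.mem_insert_iff] at ht
          push_neg at ht
          rw [Function.update_of_ne ht.1, Function.update_of_ne ht.1]
          exact hxy' t ht.2
    have hterm : ∀ (i j : Fin d) (x y : Γ → Fin d), (Emat r i j * Q i j) x y
        = if x r = i then (if j = y r then O (Function.update x r i) y else 0) else 0 := by
      intro i j x y
      rw [Emat_mul_apply]
      by_cases h1 : x r = i
      · rw [if_pos h1, if_pos h1]
        simp only [hQdef, Matrix.of_apply, Function.update_self]
        by_cases h2 : j = y r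
        · rw [if_pos h2, if_pos h2, Function.update_idem, h2, Function.update_eq_self]
        · rw [if_neg h2, if_neg h2]
      · rw [if_neg h1, if_neg h1]
    have hdecomp : O = ∑ i : Fin d, ∑ j : Fin d, Emat r i j * Q i j := by
      ext x y
      rw [Matrix.sum_apply]
      have hrow : ∀ i : Fin d, (∑ j : Fin d, Emat r i j * Q i j) x y
          = if x r = i then O (Function.update x r i) y else 0 := by
        intro i
        rw [Matrix.sum_apply]
        rw [Finset.sum_congr rfl fun j _ => hterm i j x y]
        by_cases h1 : x r = i
        · simp only [if_pos h1]
          rw [Finset.sum_ite_eq' Finset.univ (y r) (fun _ => O (Function.update x r i) y)]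
          simp
        · simp [h1]
      rw [Finset.sum_congr rfl fun i _ => hrow i]
      rw [Finset.sum_ite_eq Finset.univ (x r) (fun i => O (Function.update x r i) y)]
      simp [Function.update_eq_self]
    have hconj : Vᴴ * O * V = ∑ i : Fin d, ∑ j : Fin d,
        (Vᴴ * Emat r i j * V) * (Vᴴ * Q i j * V) := by
      rw [hdecomp]
      simp only [Matrix.mul_sum, Matrix.sum_mul]
      apply Finset.sum_congr rfl
      intro i _
      apply Finset.sum_congr rfl
      intro j _
      have : V * (Vᴴ * (Q i j * V)) = Q i j * V := by
        rw [← Matrix.mul_assoc V Vᴴ, hV.2, Matrix.one_mul]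
      simp only [Matrix.mul_assoc, this]
    rw [hconj]
    apply supportedOn_sum
    intro i _
    apply supportedOn_sum
    intro j _
    have hrmem : r ∈ (↑(insert r F) : Set Γ) := by simp
    have hsub1 : h r ⊆ ⋃ s ∈ (↑(insert r F) : Set Γ), h s := Set.subset_biUnion_of_mem hrmem
    have hsub2 : (⋃ s ∈ (↑F : Set Γ), h s) ⊆ ⋃ s ∈ (↑(insert r F) : Set Γ), h s := by
      apply Set.biUnion_subset_biUnion_left
      simp only [Finset.coe_insert]
      exact Set.subset_insert r _
    exact supportedOn_mul
      (supportedOn_mono hsub1 (hsite r _ (supportedOn_Emat r i j)))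
      (supportedOn_mono hsub2 (IH _ (hQsupp i j)))

theorem boost {V : Mat Γ d} (hV : Vᴴ * V = 1 ∧ V * Vᴴ = 1) (c : Γ → Fin d)
    (h : Γ → Set Γ)
    (hsite : ∀ (s : Γ) (O : Mat Γ d), SupportedOn {s} O → SupportedOn (h s) (Vᴴ * O * V))
    (S : Set Γ) (O : Mat Γ d) (hO : SupportedOn S O) (T : Set Γ)
    (hT : ∀ s ∈ S, h s ⊆ T) : SupportedOn T (Vᴴ * O * V) := by
  have h1 : SupportedOn (↑S.toFinset : Set Γ) O := by rwa [Set.coe_toFinset]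
  have h2 := boost_finset hV c h hsite S.toFinset O h1
  apply supportedOn_mono _ h2
  intro t ht
  simp only [Set.mem_iUnion] at ht
  obtain ⟨s, hs, hts⟩ := ht
  rw [Set.coe_toFinset] at hs
  exact hT s hs hts


section Unitary
variable {ι : Type*} [Fintype ι] [DecidableEq ι]

theorem unitary_mul {M N : Matrix ι ι ℂ} (hM : IsUnitaryMat M) (hN : IsUnitaryMat N) :
    IsUnitaryMat (M * N) := by
  constructor
  · rw [Matrix.conjTranspose_mul]
    calc Nᴴ * Mᴴ * (M * N) = Nᴴ * (Mᴴ * M) * N := by rw [Matrix.mul_assoc, Matrix.mul_assoc, Matrix.mul_assoc]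
    _ = 1 := by rw [hM.1, Matrix.mul_one, hN.1]
  · rw [Matrix.conjTranspose_mul]
    calc M * N * (Nᴴ * Mᴴ) = M * (N * Nᴴ) * Mᴴ := by rw [Matrix.mul_assoc, Matrix.mul_assoc, Matrix.mul_assoc]
    _ = 1 := by rw [hN.2, Matrix.mul_one, hM.2]

theorem unitary_conjTranspose {M : Matrix ι ι ℂ} (hM : IsUnitaryMat M) :
    IsUnitaryMat Mᴴ := by
  constructor
  · rw [Matrix.conjTranspose_conjTranspose]; exact hM.2
  · rw [Matrix.conjTranspose_conjTranspose]; exact hM.1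

theorem unitary_one : IsUnitaryMat (1 : Matrix ι ι ℂ) := by
  constructor <;> simp

end Unitary

section Sym

variable {G : Type*} [Group G] {d : ℕ} {u : G → Matrix (Fin d) (Fin d) ℂ}
variable (hu_unit : ∀ g, IsUnitaryMat (u g)) (hu_mul : ∀ g h, u (g * h) = u g * u h)

include hu_unit hu_mul in
theorem u_one_eq : u 1 = 1 := by
  have h1 : u 1 * u 1 = u 1 := by rw [← hu_mul, one_mul]
  have h2 := (hu_unit 1).1
  calc u 1 = ((u 1)ᴴ * u 1) * u 1 := by rw [h2, Matrix.one_mul]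
  _ = (u 1)ᴴ * (u 1 * u 1) := by rw [Matrix.mul_assoc]
  _ = 1 := by rw [h1, h2]

include hu_unit hu_mul in
theorem u_conjTranspose (g : G) : (u g)ᴴ = u g⁻¹ := by
  have h1 : u g * u g⁻¹ = 1 := by rw [← hu_mul, mul_inv_cancel]; exact u_one_eq hu_unit hu_mul
  calc (u g)ᴴ = (u g)ᴴ * (u g * u g⁻¹) := by rw [h1, Matrix.mul_one]
  _ = u g⁻¹ := by rw [← Matrix.mul_assoc, (hu_unit g).1, Matrix.one_mul]

variable {Λ : Type*} [Fintype Λ] [DecidableEq Λ]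

include hu_unit hu_mul in
theorem symOp_conjTranspose (g : G) :
    (symOp u g : Matrix (Λ → Fin d) (Λ → Fin d) ℂ)ᴴ = symOp u g⁻¹ := by
  ext x y
  rw [Matrix.conjTranspose_apply]
  simp only [symOp, Matrix.of_apply]
  rw [show (star (∏ r, u g (y r) (x r)) : ℂ) = ∏ r, star (u g (y r) (x r)) from map_prod (starRingEnd ℂ) _ _]
  apply Finset.prod_congr rfl
  intro r _
  rw [← Matrix.conjTranspose_apply, u_conjTranspose hu_unit hu_mul]

include hu_unit hu_mul in
theorem gsymm_conjTranspose {M : Matrix (Λ → Fin d) (Λ → Fin d) ℂ}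
    (hM : IsGSymm u M) : IsGSymm u Mᴴ := by
  intro g
  have h := congrArg Matrix.conjTranspose (hM g⁻¹)
  rw [Matrix.conjTranspose_mul, Matrix.conjTranspose_mul,
    symOp_conjTranspose hu_unit hu_mul, inv_inv] at h
  exact h.symm

theorem gsymm_mul {M N : Matrix (Λ → Fin d) (Λ → Fin d) ℂ}
    (hM : IsGSymm u M) (hN : IsGSymm u N) : IsGSymm u (M * N) := by
  intro g
  rw [Matrix.mul_assoc, hN g, ← Matrix.mul_assoc, hM g, Matrix.mul_assoc]

theorem gsymm_one : IsGSymm u (1 : Matrix (Λ → Fin d) (Λ → Fin d) ℂ) := by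
  intro g; rw [Matrix.one_mul, Matrix.mul_one]

end Sym

section Kron
variable {Λ : Type*} [Fintype Λ] [DecidableEq Λ] {d : ℕ}

def kron (M N : Mat Λ d) : Mat (Λ ⊕ Λ) d :=
  Matrix.of fun x y => M (x ∘ Sum.inl) (y ∘ Sum.inl) * N (x ∘ Sum.inr) (y ∘ Sum.inr)

theorem kron_apply (M N : Mat Λ d) (x y : Λ ⊕ Λ → Fin d) :
    kron M N x y = M (x ∘ Sum.inl) (y ∘ Sum.inl) * N (x ∘ Sum.inr) (y ∘ Sum.inr) := rfl

theorem kron_eq_reindex (M N : Mat Λ d) :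
    kron M N = Matrix.reindex (Equiv.sumArrowEquivProdArrow Λ Λ (Fin d)).symm
      (Equiv.sumArrowEquivProdArrow Λ Λ (Fin d)).symm
      (Matrix.kroneckerMap (· * ·) M N) := by
  ext x y
  simp [kron, Matrix.reindex_apply, Matrix.submatrix_apply,
    Equiv.sumArrowEquivProdArrow, Matrix.kroneckerMap_apply]

theorem kron_mul (M N M' N' : Mat Λ d) :
    kron M N * kron M' N' = kron (M * M') (N * N') := by
  ext x y
  rw [Matrix.mul_apply]
  rw [← Equiv.sum_comp (Equiv.sumArrowEquivProdArrow Λ Λ (Fin d)).symm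
      (fun z => kron M N x z * kron M' N' z y)]
  rw [Fintype.sum_prod_type]
  simp only [kron, Matrix.of_apply, Equiv.sumArrowEquivProdArrow, Equiv.coe_fn_symm_mk,
    Sum.elim_comp_inl, Sum.elim_comp_inr]
  rw [Matrix.mul_apply, Matrix.mul_apply, Finset.sum_mul_sum]
  apply Finset.sum_congr rfl
  intro z1 _
  apply Finset.sum_congr rfl
  intro z2 _
  ring

theorem kron_one_one : kron (1 : Mat Λ d) 1 = (1 : Mat (Λ ⊕ Λ) d) := by
  ext x y
  rw [kron_apply, Matrix.one_apply, Matrix.one_apply, Matrix.one_apply]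
  have : x = y ↔ (x ∘ Sum.inl = y ∘ Sum.inl ∧ x ∘ Sum.inr = y ∘ Sum.inr) := by
    constructor
    · intro h; subst h; exact ⟨rfl, rfl⟩
    · rintro ⟨h1, h2⟩
      funext s
      cases s with
      | inl r => exact congrFun h1 r
      | inr r => exact congrFun h2 r
  split_ifs with h1 h2 h3 h3 h2 <;> simp_all [this]

theorem kron_conjTranspose (M N : Mat Λ d) : (kron M N)ᴴ = kron Mᴴ Nᴴ := by
  ext x y
  rw [Matrix.conjTranspose_apply, kron_apply, kron_apply, Matrix.conjTranspose_apply,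
    Matrix.conjTranspose_apply]
  exact star_mul' _ _

theorem kron_unitary {M N : Mat Λ d} (hM : IsUnitaryMat M) (hN : IsUnitaryMat N) :
    IsUnitaryMat (kron M N) := by
  constructor
  · rw [kron_conjTranspose, kron_mul, hM.1, hN.1, kron_one_one]
  · rw [kron_conjTranspose, kron_mul, hM.2, hN.2, kron_one_one]

variable {G : Type*} [Group G] {u : G → Matrix (Fin d) (Fin d) ℂ}

theorem symOp_sum_eq (g : G) :
    (symOp u g : Mat (Λ ⊕ Λ) d) = kron (symOp u g) (symOp u g) := by
  ext x y
  rw [kron_apply]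
  simp only [symOp, Matrix.of_apply]
  rw [Fintype.prod_sum_type]
  rfl

theorem kron_gsymm {M N : Mat Λ d} (hM : IsGSymm u M) (hN : IsGSymm u N) :
    IsGSymm u (kron M N) := by
  intro g
  rw [symOp_sum_eq, kron_mul, kron_mul, hM g, hN g]

theorem kron_supported_left {T : Set Λ} {M : Mat Λ d} (hM : SupportedOn T M) :
    SupportedOn (Sum.inl '' T) (kron M (1 : Mat Λ d)) := by
  constructor
  · rintro x y ⟨s, hs, hne⟩
    rw [kron_apply]
    cases s with
    | inl r =>
      have hr : r ∉ T := fun h => hs ⟨r, h, rfl⟩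
      rw [hM.1 _ _ ⟨r, hr, hne⟩, zero_mul]
    | inr r =>
      rw [Matrix.one_apply_ne (fun h => hne (congrFun h r)), mul_zero]
  · intro x y x' y' hx hy hxy hxy'
    rw [kron_apply, kron_apply]
    have hinr : ∀ r : Λ, Sum.inr r ∉ Sum.inl '' T := by
      rintro r ⟨t, _, h⟩
      exact absurd h (by simp)
    have h1 : x ∘ Sum.inr = y ∘ Sum.inr := funext fun r => hxy _ (hinr r)
    have h1' : x' ∘ Sum.inr = y' ∘ Sum.inr := funext fun r => hxy' _ (hinr r)
    rw [h1, h1', Matrix.one_apply_eq, Matrix.one_apply_eq, mul_one, mul_one]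
    apply hM.2
    · intro r hr
      exact hx (Sum.inl r) ⟨r, hr, rfl⟩
    · intro r hr
      exact hy (Sum.inl r) ⟨r, hr, rfl⟩
    · intro r hr
      exact hxy (Sum.inl r) (by rintro ⟨t, ht, hh⟩; cases hh; exact hr ht)
    · intro r hr
      exact hxy' (Sum.inl r) (by rintro ⟨t, ht, hh⟩; cases hh; exact hr ht)

theorem kron_supported_right {T : Set Λ} {N : Mat Λ d} (hN : SupportedOn T N) :
    SupportedOn (Sum.inr '' T) (kron (1 : Mat Λ d) N) := by
  constructor
  · rintro x y ⟨s, hs, hne⟩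
    rw [kron_apply]
    cases s with
    | inr r =>
      have hr : r ∉ T := fun h => hs ⟨r, h, rfl⟩
      rw [hN.1 _ _ ⟨r, hr, hne⟩, mul_zero]
    | inl r =>
      rw [Matrix.one_apply_ne (fun h => hne (congrFun h r)), zero_mul]
  · intro x y x' y' hx hy hxy hxy'
    rw [kron_apply, kron_apply]
    have hinl : ∀ r : Λ, Sum.inl r ∉ Sum.inr '' T := by
      rintro r ⟨t, _, h⟩
      exact absurd h (by simp)
    have h1 : x ∘ Sum.inl = y ∘ Sum.inl := funext fun r => hxy _ (hinl r)
    have h1' : x' ∘ Sum.inl = y' ∘ Sum.inl := funext fun r => hxy' _ (hinl r)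
    rw [h1, h1', Matrix.one_apply_eq, Matrix.one_apply_eq, one_mul, one_mul]
    apply hN.2
    · intro r hr
      exact hx (Sum.inr r) ⟨r, hr, rfl⟩
    · intro r hr
      exact hy (Sum.inr r) ⟨r, hr, rfl⟩
    · intro r hr
      exact hxy (Sum.inr r) (by rintro ⟨t, ht, hh⟩; cases hh; exact hr ht)
    · intro r hr
      exact hxy' (Sum.inr r) (by rintro ⟨t, ht, hh⟩; cases hh; exact hr ht)

theorem eq_kron_of_supportedOn_inl {r : Λ} {O : Mat (Λ ⊕ Λ) d} (c : Λ → Fin d)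
    (hO : SupportedOn {Sum.inl r} O) :
    ∃ O₁ : Mat Λ d, SupportedOn {r} O₁ ∧ O = kron O₁ (1 : Mat Λ d) := by
  refine ⟨Matrix.of fun p q => O (Sum.elim p c) (Sum.elim q c), ?_, ?_⟩
  · constructor
    · rintro p q ⟨t, ht, hne⟩
      simp only [Set.mem_singleton_iff] at ht
      apply hO.1
      exact ⟨Sum.inl t, by simp [ht], hne⟩
    · intro p q p' q' hp hq hpq hpq'
      simp only [Set.mem_singleton_iff, forall_eq] at hp hq
      simp only [Set.mem_singleton_iff] at hpq hpq'
      apply hO.2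
      · rintro s hs
        rw [Set.mem_singleton_iff] at hs
        subst hs
        exact hp
      · rintro s hs
        rw [Set.mem_singleton_iff] at hs
        subst hs
        exact hq
      · intro s hs
        rw [Set.mem_singleton_iff] at hs
        cases s with
        | inl t =>
          have : t ≠ r := fun h => hs (by rw [h])
          exact hpq t this
        | inr t => rfl
      · intro s hs
        rw [Set.mem_singleton_iff] at hs
        cases s with
        | inl t =>
          have : t ≠ r := fun h => hs (by rw [h])
          exact hpq' t this
        | inr t => rfl
  · ext x y
    rw [kron_apply, Matrix.of_apply]
    by_cases h2 : x ∘ Sum.inr = y ∘ Sum.inr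
    · rw [h2, Matrix.one_apply_eq, mul_one]
      by_cases h3 : ∀ t, t ≠ r → x (Sum.inl t) = y (Sum.inl t)
      · apply hO.2
        · rintro s hs
          rw [Set.mem_singleton_iff] at hs
          subst hs
          rfl
        · rintro s hs
          rw [Set.mem_singleton_iff] at hs
          subst hs
          rfl
        · intro s hs
          rw [Set.mem_singleton_iff] at hs
          cases s with
          | inl t =>
            have : t ≠ r := fun h => hs (by rw [h])
            exact h3 t this
          | inr t => exact congrFun h2 t
        · intro s hs
          rw [Set.mem_singleton_iff] at hs
          cases s with
          | inl t =>
            have : t ≠ r := fun h => hs (by rw [h])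
            exact h3 t this
          | inr t => rfl
      · push_neg at h3
        obtain ⟨t, htr, hne⟩ := h3
        rw [hO.1 x y ⟨Sum.inl t, by simp [htr], hne⟩]
        exact (hO.1 _ _ ⟨Sum.inl t, by simp [htr], by simpa using hne⟩).symm
    · have : ∃ t, x (Sum.inr t) ≠ y (Sum.inr t) := by
        by_contra hc
        push_neg at hc
        exact h2 (funext hc)
      obtain ⟨t, hne⟩ := this
      rw [hO.1 x y ⟨Sum.inr t, by simp, hne⟩, Matrix.one_apply_ne h2, mul_zero]

theorem eq_kron_of_supportedOn_inr {r : Λ} {O : Mat (Λ ⊕ Λ) d} (c : Λ → Fin d)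
    (hO : SupportedOn {Sum.inr r} O) :
    ∃ O₂ : Mat Λ d, SupportedOn {r} O₂ ∧ O = kron (1 : Mat Λ d) O₂ := by
  refine ⟨Matrix.of fun p q => O (Sum.elim c p) (Sum.elim c q), ?_, ?_⟩
  · constructor
    · rintro p q ⟨t, ht, hne⟩
      simp only [Set.mem_singleton_iff] at ht
      apply hO.1
      exact ⟨Sum.inr t, by simp [ht], hne⟩
    · intro p q p' q' hp hq hpq hpq'
      simp only [Set.mem_singleton_iff, forall_eq] at hp hq
      simp only [Set.mem_singleton_iff] at hpq hpq'
      apply hO.2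
      · rintro s hs
        rw [Set.mem_singleton_iff] at hs
        subst hs
        exact hp
      · rintro s hs
        rw [Set.mem_singleton_iff] at hs
        subst hs
        exact hq
      · intro s hs
        rw [Set.mem_singleton_iff] at hs
        cases s with
        | inr t =>
          have : t ≠ r := fun h => hs (by rw [h])
          exact hpq t this
        | inl t => rfl
      · intro s hs
        rw [Set.mem_singleton_iff] at hs
        cases s with
        | inr t =>
          have : t ≠ r := fun h => hs (by rw [h])
          exact hpq' t this
        | inl t => rfl
  · ext x y
    rw [kron_apply, Matrix.of_apply]
    by_cases h2 : x ∘ Sum.inl = y ∘ Sum.inl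
    · rw [h2, Matrix.one_apply_eq, one_mul]
      by_cases h3 : ∀ t, t ≠ r → x (Sum.inr t) = y (Sum.inr t)
      · apply hO.2
        · rintro s hs
          rw [Set.mem_singleton_iff] at hs
          subst hs
          rfl
        · rintro s hs
          rw [Set.mem_singleton_iff] at hs
          subst hs
          rfl
        · intro s hs
          rw [Set.mem_singleton_iff] at hs
          cases s with
          | inr t =>
            have : t ≠ r := fun h => hs (by rw [h])
            exact h3 t this
          | inl t => exact congrFun h2 t
        · intro s hs
          rw [Set.mem_singleton_iff] at hs
          cases s with
          | inr t =>
            have : t ≠ r := fun h => hs (by rw [h])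
            exact h3 t this
          | inl t => rfl
      · push_neg at h3
        obtain ⟨t, htr, hne⟩ := h3
        rw [hO.1 x y ⟨Sum.inr t, by simp [htr], hne⟩]
        exact (hO.1 _ _ ⟨Sum.inr t, by simp [htr], by simpa using hne⟩).symm
    · have : ∃ t, x (Sum.inl t) ≠ y (Sum.inl t) := by
        by_contra hc
        push_neg at hc
        exact h2 (funext hc)
      obtain ⟨t, hne⟩ := this
      rw [hO.1 x y ⟨Sum.inl t, by simp, hne⟩, Matrix.one_apply_ne h2, zero_mul]

end Kron




section Swap
variable {Λ : Type*} [Fintype Λ] [DecidableEq Λ] {d : ℕ}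

noncomputable def swapFun (Q : Set Λ) : Λ ⊕ Λ → Λ ⊕ Λ := fun s =>
  match s with
  | Sum.inl r => if r ∈ Q then Sum.inr r else Sum.inl r
  | Sum.inr r => if r ∈ Q then Sum.inl r else Sum.inr r

theorem swapFun_invol (Q : Set Λ) : Function.Involutive (swapFun Q) := by
  intro s
  cases s with
  | inl r =>
    by_cases h : r ∈ Q <;> simp [swapFun, h]
  | inr r =>
    by_cases h : r ∈ Q <;> simp [swapFun, h]

noncomputable def swapM (Q : Set Λ) : Mat (Λ ⊕ Λ) d :=
  Matrix.of fun x y => if x ∘ swapFun Q = y then 1 else 0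

theorem swapM_mul_apply (Q : Set Λ) (M : Mat (Λ ⊕ Λ) d) (x y : Λ ⊕ Λ → Fin d) :
    ((swapM Q * M : Mat (Λ ⊕ Λ) d)) x y = M (x ∘ swapFun Q) y := by
  rw [Matrix.mul_apply]
  have : ∀ z, swapM Q x z * M z y = if x ∘ swapFun Q = z then M z y else 0 := by
    intro z
    simp only [swapM, Matrix.of_apply]
    split_ifs <;> simp
  rw [Finset.sum_congr rfl fun z _ => this z]
  rw [Finset.sum_ite_eq Finset.univ (x ∘ swapFun Q) (fun z => M z y)]
  simp

theorem mul_swapM_apply (Q : Set Λ) (M : Mat (Λ ⊕ Λ) d) (x y : Λ ⊕ Λ → Fin d) :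
    ((M * swapM Q : Mat (Λ ⊕ Λ) d)) x y = M x (y ∘ swapFun Q) := by
  rw [Matrix.mul_apply]
  have hiff : ∀ z : Λ ⊕ Λ → Fin d, z ∘ swapFun Q = y ↔ z = y ∘ swapFun Q := by
    intro z
    constructor
    · intro h
      funext s
      have := congrFun h (swapFun Q s)
      rwa [Function.comp_apply, swapFun_invol Q s] at this
    · intro h
      subst h
      funext s
      rw [Function.comp_apply, Function.comp_apply, swapFun_invol Q s]
  have : ∀ z, M x z * swapM Q z y = if z = y ∘ swapFun Q then M x z else 0 := by
    intro z
    simp only [swapM, Matrix.of_apply, hiff z]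
    split_ifs <;> simp
  rw [Finset.sum_congr rfl fun z _ => this z]
  rw [Finset.sum_ite_eq' Finset.univ (y ∘ swapFun Q) (fun z => M x z)]
  simp

theorem swapM_conj_apply (Q : Set Λ) (M : Mat (Λ ⊕ Λ) d) (x y : Λ ⊕ Λ → Fin d) :
    ((swapM Q * M * swapM Q : Mat (Λ ⊕ Λ) d)) x y = M (x ∘ swapFun Q) (y ∘ swapFun Q) := by
  rw [mul_swapM_apply, swapM_mul_apply]

theorem swapM_conjTranspose (Q : Set Λ) : (swapM Q : Mat (Λ ⊕ Λ) d)ᴴ = swapM Q := by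
  ext x y
  rw [Matrix.conjTranspose_apply]
  simp only [swapM, Matrix.of_apply]
  have : y ∘ swapFun Q = x ↔ x ∘ swapFun Q = y := by
    constructor
    · intro h
      subst h
      funext s
      rw [Function.comp_apply, Function.comp_apply, swapFun_invol Q s]
    · intro h
      subst h
      funext s
      rw [Function.comp_apply, Function.comp_apply, swapFun_invol Q s]
  rw [if_congr this rfl rfl]
  split_ifs <;> simp

theorem swapM_mul_self (Q : Set Λ) : (swapM Q : Mat (Λ ⊕ Λ) d) * swapM Q = 1 := by
  ext x y
  rw [swapM_mul_apply]
  simp only [swapM, Matrix.of_apply, Matrix.one_apply]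
  have : (x ∘ swapFun Q) ∘ swapFun Q = y ↔ x = y := by
    have hx : (x ∘ swapFun Q) ∘ swapFun Q = x := by
      funext s
      simp [Function.comp_apply, swapFun_invol Q s]
    rw [hx]
  rw [if_congr this rfl rfl]

theorem swapM_unitary (Q : Set Λ) : IsUnitaryMat (swapM Q : Mat (Λ ⊕ Λ) d) := by
  constructor
  · rw [swapM_conjTranspose, swapM_mul_self]
  · rw [swapM_conjTranspose, swapM_mul_self]

variable {G : Type*} [Group G] {u : G → Matrix (Fin d) (Fin d) ℂ}

theorem swapM_gsymm (Q : Set Λ) : IsGSymm u (swapM Q : Mat (Λ ⊕ Λ) d) := by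
  intro g
  ext x y
  rw [swapM_mul_apply, mul_swapM_apply]
  simp only [symOp, Matrix.of_apply]
  have key : ∀ s : Λ ⊕ Λ, u g ((x ∘ swapFun Q) s) (y s)
      = (fun s => u g (x s) ((y ∘ swapFun Q) s)) ((Function.Involutive.toPerm (swapFun Q) (swapFun_invol Q)) s) := by
    intro s
    simp only [Function.comp_apply, Function.Involutive.coe_toPerm]
    rw [swapFun_invol Q s]
  rw [Finset.prod_congr rfl fun s _ => key s]
  exact Equiv.prod_comp (Function.Involutive.toPerm (swapFun Q) (swapFun_invol Q))
    (fun s => u g (x s) ((y ∘ swapFun Q) s))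

theorem swapM_supported (Q : Set Λ) :
    SupportedOn (Sum.inl '' Q ∪ Sum.inr '' Q) (swapM Q : Mat (Λ ⊕ Λ) d) := by
  have hfix : ∀ s, s ∉ Sum.inl '' Q ∪ Sum.inr '' Q → swapFun Q s = s := by
    intro s hs
    cases s with
    | inl r =>
      have : r ∉ Q := fun h => hs (Or.inl ⟨r, h, rfl⟩)
      simp [swapFun, this]
    | inr r =>
      have : r ∉ Q := fun h => hs (Or.inr ⟨r, h, rfl⟩)
      simp [swapFun, this]
  have hmap : ∀ s, s ∈ Sum.inl '' Q ∪ Sum.inr '' Q → swapFun Q s ∈ Sum.inl '' Q ∪ Sum.inr '' Q := by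
    intro s hs
    cases s with
    | inl r =>
      have : r ∈ Q := by
        rcases hs with ⟨t, ht, hh⟩ | ⟨t, ht, hh⟩
        · cases hh; exact ht
        · exact absurd hh (by simp)
      simp only [swapFun, if_pos this]
      exact Or.inr ⟨r, this, rfl⟩
    | inr r =>
      have : r ∈ Q := by
        rcases hs with ⟨t, ht, hh⟩ | ⟨t, ht, hh⟩
        · exact absurd hh (by simp)
        · cases hh; exact ht
      simp only [swapFun, if_pos this]
      exact Or.inl ⟨r, this, rfl⟩
  constructor
  · rintro x y ⟨s, hs, hne⟩
    simp only [swapM, Matrix.of_apply, ite_eq_right_iff]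
    intro h
    exfalso
    apply hne
    have := congrFun h s
    rwa [Function.comp_apply, hfix s hs] at this
  · intro x y x' y' hx hy hxy hxy'
    simp only [swapM, Matrix.of_apply]
    have : x ∘ swapFun Q = y ↔ x' ∘ swapFun Q = y' := by
      constructor
      · intro h
        funext s
        by_cases hs : s ∈ Sum.inl '' Q ∪ Sum.inr '' Q
        · rw [Function.comp_apply, ← hx _ (hmap s hs), ← hy _ hs]
          exact congrFun h s
        · rw [Function.comp_apply, hfix s hs]
          exact hxy' s hs
      · intro h
        funext s
        by_cases hs : s ∈ Sum.inl '' Q ∪ Sum.inr '' Q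
        · rw [Function.comp_apply, hx _ (hmap s hs), hy _ hs]
          exact congrFun h s
        · rw [Function.comp_apply, hfix s hs]
          exact hxy s hs
    rw [if_congr this rfl rfl]

end Swap


section LPU
variable {Λ : Type*} [Fintype Λ] [DecidableEq Λ] [MetricSpace Λ] {d : ℕ}

theorem lpu_inv {ξ : ℝ} {U : Mat Λ d} (hU : IsStrictLPU ξ U) :
    ∀ (r : Λ) (O : Mat Λ d), SupportedOn {r} O →
      SupportedOn (Metric.closedBall r ξ) (U * O * Uᴴ) := by
  intro r O hO
  apply supportedOn_of_commute
  intro s hs O' hO'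
  set X : Mat Λ d := Uᴴ * O' * U with hX
  have hXsupp : SupportedOn (Metric.closedBall s ξ) X := hU.2 s O' hO'
  have hdisj : ∀ t ∈ ({r} : Set Λ), t ∉ Metric.closedBall s ξ := by
    intro t ht
    rw [Set.mem_singleton_iff] at ht
    subst ht
    intro hmem
    apply hs
    rw [Metric.mem_closedBall] at hmem ⊢
    rwa [dist_comm]
  have hXO : O * X = X * O := commute_of_disjoint hO hXsupp hdisj
  have hUUh : ∀ Y : Mat Λ d, U * (Uᴴ * Y) = Y := by
    intro Y
    rw [← Matrix.mul_assoc, hU.1.2, Matrix.one_mul]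
  have hUhU : ∀ Y : Mat Λ d, Uᴴ * (U * Y) = Y := by
    intro Y
    rw [← Matrix.mul_assoc, hU.1.1, Matrix.one_mul]
  have e0 : U * X * Uᴴ = O' := by
    rw [hX]
    simp only [Matrix.mul_assoc]
    rw [show O' * (U * Uᴴ) = O' from by rw [hU.1.2, Matrix.mul_one], hUUh]
  rw [← e0]
  simp only [Matrix.mul_assoc]
  rw [hUhU, hUhU]
  rw [← Matrix.mul_assoc O X Uᴴ, hXO, Matrix.mul_assoc X O Uᴴ]

end LPU


section Site
variable {Λ : Type*} [Fintype Λ] [DecidableEq Λ] {d : ℕ}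

theorem kron_site {f : Λ → Set Λ} {U : Mat Λ d} (hUu : IsUnitaryMat U) (c : Λ → Fin d)
    (hconj : ∀ (r : Λ) (O₁ : Mat Λ d), SupportedOn {r} O₁ → SupportedOn (f r) (Uᴴ * O₁ * U)) :
    ∀ (s : Λ ⊕ Λ) (O : Mat (Λ ⊕ Λ) d), SupportedOn {s} O →
      SupportedOn (Sum.elim (fun r => Sum.inl '' f r) (fun r => {Sum.inr r}) s)
        ((kron U 1)ᴴ * O * kron U 1) := by
  intro s O hO
  cases s with
  | inl r =>
    obtain ⟨O₁, hsupp, hOeq⟩ := eq_kron_of_supportedOn_inl c hO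
    rw [hOeq, kron_conjTranspose, Matrix.conjTranspose_one, kron_mul, kron_mul]
    simp only [Matrix.one_mul, Matrix.mul_one, Sum.elim_inl]
    exact kron_supported_left (hconj r O₁ hsupp)
  | inr r =>
    obtain ⟨O₂, hsupp, hOeq⟩ := eq_kron_of_supportedOn_inr c hO
    rw [hOeq, kron_conjTranspose, Matrix.conjTranspose_one, kron_mul, kron_mul]
    simp only [Matrix.one_mul, Matrix.mul_one, Sum.elim_inr]
    rw [show Uᴴ * U = (1 : Mat Λ d) from hUu.1]
    have := kron_supported_right hsupp
    rw [Set.image_singleton] at this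
    exact this

theorem double_swap_supported {f : Λ → Set Λ} {U : Mat Λ d} (hUu : IsUnitaryMat U)
    (c : Λ → Fin d)
    (hconj : ∀ (r : Λ) (O₁ : Mat Λ d), SupportedOn {r} O₁ → SupportedOn (f r) (Uᴴ * O₁ * U))
    (D T : Set Λ) (hfT : ∀ r ∈ D, f r ⊆ T) :
    SupportedOn (Sum.inl '' T ∪ Sum.inr '' D) ((kron U 1)ᴴ * swapM D * kron U 1) := by
  have hVu := kron_unitary hUu (unitary_one (ι := Λ → Fin d))
  apply boost ⟨hVu.1, hVu.2⟩ (Sum.elim c c)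
    (h := Sum.elim (fun r => Sum.inl '' f r) (fun r => {Sum.inr r}))
    (hsite := kron_site hUu c hconj)
    (S := Sum.inl '' D ∪ Sum.inr '' D) (hO := swapM_supported D)
  intro s hs
  rcases hs with ⟨r, hr, rfl⟩ | ⟨r, hr, rfl⟩
  · simp only [Sum.elim_inl]
    intro t ht
    obtain ⟨w, hw, rfl⟩ := ht
    exact Or.inl ⟨w, hfT r hr hw, rfl⟩
  · simp only [Sum.elim_inr]
    intro t ht
    rw [Set.mem_singleton_iff] at ht
    subst ht
    exact Or.inr ⟨r, hr, rfl⟩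

theorem swapFun_partition (D A B : Set Λ) (s : Λ ⊕ Λ) :
    swapFun (Dᶜ ∩ Aᶜ ∩ Bᶜ) (swapFun (Dᶜ ∩ Aᶜ ∩ B) (swapFun (Dᶜ ∩ A ∩ Bᶜ)
      (swapFun (Dᶜ ∩ A ∩ B) (swapFun D s)))) = Sum.swap s := by
  cases s with
  | inl r =>
    by_cases hD : r ∈ D <;> by_cases hA : r ∈ A <;> by_cases hB : r ∈ B <;>
      simp [swapFun, hD, hA, hB]
  | inr r =>
    by_cases hD : r ∈ D <;> by_cases hA : r ∈ A <;> by_cases hB : r ∈ B <;>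
      simp [swapFun, hD, hA, hB]

theorem conj_chain (D A B : Set Λ) (M N : Mat Λ d) :
    swapM (Dᶜ ∩ Aᶜ ∩ Bᶜ) * (swapM (Dᶜ ∩ Aᶜ ∩ B) * (swapM (Dᶜ ∩ A ∩ Bᶜ) *
      (swapM (Dᶜ ∩ A ∩ B) * (swapM D * kron M N * swapM D) * swapM (Dᶜ ∩ A ∩ B))
      * swapM (Dᶜ ∩ A ∩ Bᶜ)) * swapM (Dᶜ ∩ Aᶜ ∩ B)) * swapM (Dᶜ ∩ Aᶜ ∩ Bᶜ)
      = kron N M := by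
  ext x y
  rw [swapM_conj_apply, swapM_conj_apply, swapM_conj_apply, swapM_conj_apply, swapM_conj_apply,
    kron_apply, kron_apply]
  have hco : ∀ z : Λ ⊕ Λ → Fin d,
      ((((z ∘ swapFun (Dᶜ ∩ Aᶜ ∩ Bᶜ)) ∘ swapFun (Dᶜ ∩ Aᶜ ∩ B)) ∘ swapFun (Dᶜ ∩ A ∩ Bᶜ))
        ∘ swapFun (Dᶜ ∩ A ∩ B)) ∘ swapFun D = z ∘ Sum.swap := by
    intro z
    funext t
    simp only [Function.comp_apply]
    rw [show swapFun (Dᶜ ∩ Aᶜ ∩ Bᶜ) (swapFun (Dᶜ ∩ Aᶜ ∩ B) (swapFun (Dᶜ ∩ A ∩ Bᶜ)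
      (swapFun (Dᶜ ∩ A ∩ B) (swapFun D t)))) = Sum.swap t from swapFun_partition D A B t]
  rw [hco x, hco y]
  have h1 : ∀ z : Λ ⊕ Λ → Fin d, (z ∘ Sum.swap) ∘ Sum.inl = z ∘ Sum.inr := by
    intro z; funext t; rfl
  have h2 : ∀ z : Λ ⊕ Λ → Fin d, (z ∘ Sum.swap) ∘ Sum.inr = z ∘ Sum.inl := by
    intro z; funext t; rfl
  rw [h1, h1, h2, h2]
  ring

end Site

end Aux

namespace Aux

theorem union_image_subset {Λ : Type*} {Q R A1 A2 : Set Λ} (h1 : Q ⊆ A1) (h2 : R ⊆ A2) :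
    Sum.inl '' Q ∪ Sum.inr '' R ⊆
      (Sum.inl '' A1 ∪ Sum.inr '' A2 : Set (Λ ⊕ Λ)) := by
  rintro s (⟨t, ht, rfl⟩ | ⟨t, ht, rfl⟩)
  · exact Or.inl ⟨t, h1 ht, rfl⟩
  · exact Or.inr ⟨t, h2 ht, rfl⟩

theorem union_image_subset_compl {Λ : Type*} {Q R A1 A2 : Set Λ}
    (h1 : ∀ t ∈ Q, t ∉ A1) (h2 : ∀ t ∈ R, t ∉ A2) :
    Sum.inl '' Q ∪ Sum.inr '' R ⊆
      ((Sum.inl '' A1 ∪ Sum.inr '' A2 : Set (Λ ⊕ Λ)))ᶜ := by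
  rintro s (⟨t, ht, rfl⟩ | ⟨t, ht, rfl⟩) <;> rintro (⟨w, hw, hww⟩ | ⟨w, hw, hww⟩)
  · obtain rfl := Sum.inl_injective hww
    exact h1 w ht hw
  · exact absurd hww (by simp)
  · exact absurd hww (by simp)
  · obtain rfl := Sum.inr_injective hww
    exact h2 w ht hw

end Aux

theorem omega_conj {d : ℕ} {G : Type} [Group G] {u : G → Matrix (Fin d) (Fin d) ℂ}
    (Φ : LatticeFlow d G u) {Λ : Type} [Fintype Λ] [DecidableEq Λ]
    (At Bt : Set (Λ ⊕ Λ)) (M : Matrix ((Λ ⊕ Λ) → Fin d) ((Λ ⊕ Λ) → Fin d) ℂ)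
    (hMu : IsUnitaryMat M) (hMg : IsGSymm u M) (Q : Set Λ)
    (hA : SupportedOn At (Aux.swapM (d := d) Q) ∨ SupportedOn Atᶜ (Aux.swapM (d := d) Q))
    (hB : SupportedOn Bt (Aux.swapM (d := d) Q) ∨ SupportedOn Btᶜ (Aux.swapM (d := d) Q)) :
    Φ.omega (Λ ⊕ Λ) At Bt (Aux.swapM Q * M * Aux.swapM Q) = Φ.omega (Λ ⊕ Λ) At Bt M := by
  have h1 := Φ.left_inv (Λ ⊕ Λ) At Bt (M * Aux.swapM Q) (Aux.swapM Q)
    (Aux.unitary_mul hMu (Aux.swapM_unitary Q)) (Aux.gsymm_mul hMg (Aux.swapM_gsymm Q))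
    (Aux.swapM_unitary Q) (Aux.swapM_gsymm Q) hA
  have h2 := Φ.right_inv (Λ ⊕ Λ) At Bt M (Aux.swapM Q) hMu hMg
    (Aux.swapM_unitary Q) (Aux.swapM_gsymm Q) hB
  rw [← Matrix.mul_assoc] at h1
  rw [h1, h2]

/-- Theorem 1.2: for a flow `Ω` and a `G`-symmetric strict LPU `U` with operator spreading
length `ξ`, (i) `Ω_{A,B}(U) = Ω_{A∖{a},B}(U)` for `a ∈ A` with `a ∉ ∂_{4ξ}B`, and
(ii) `Ω_{A,B}(U) = Ω_{A,B∖{b}}(U)` for `b ∈ B` with `b ∉ ∂_{4ξ}A`. -/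
theorem flow_site_removal
    {d : ℕ} (hd : 1 ≤ d) {G : Type} [Group G]
    (u : G → Matrix (Fin d) (Fin d) ℂ)
    (hu_unit : ∀ g, IsUnitaryMat (u g))
    (hu_mul : ∀ g h, u (g * h) = u g * u h)
    (Φ : LatticeFlow d G u)
    (Λ : Type) [Fintype Λ] [DecidableEq Λ] [MetricSpace Λ]
    (ξ : ℝ) (hξ : 0 ≤ ξ)
    (U : Matrix (Λ → Fin d) (Λ → Fin d) ℂ)
    (hU : IsStrictLPU ξ U) (hUG : IsGSymm u U)
    (A B : Set Λ) :
    (∀ a ∈ A, a ∉ thickBd (4 * ξ) B →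
      Φ.omega Λ A B U = Φ.omega Λ (A \ {a}) B U) ∧
    (∀ b ∈ B, b ∉ thickBd (4 * ξ) A →
      Φ.omega Λ A B U = Φ.omega Λ A (B \ {b}) U) := by
  classical
  obtain ⟨hUu, hUconj⟩ := hU
  obtain ⟨c, -⟩ : ∃ c : Λ → Fin d, True := ⟨fun _ => ⟨0, hd⟩, trivial⟩
  constructor
  · -- Part (i)
    intro a haA ha'
    have haD : a ∈ Metric.closedBall a (2*ξ) := Metric.mem_closedBall_self (by linarith)
    have hD3 : Metric.closedBall a (2*ξ) ⊆ Metric.closedBall a (3*ξ) := by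
      intro t ht
      rw [Metric.mem_closedBall] at ht ⊢
      linarith
    have hfT : ∀ r ∈ Metric.closedBall a (2*ξ),
        Metric.closedBall r ξ ⊆ Metric.closedBall a (3*ξ) := by
      intro r hr t ht
      rw [Metric.mem_closedBall] at hr ht ⊢
      calc dist t a ≤ dist t r + dist r a := dist_triangle t r a
      _ ≤ 3*ξ := by linarith
    have hball : Metric.closedBall a (3*ξ) ⊆ B ∨ Metric.closedBall a (3*ξ) ⊆ Bᶜ := by
      by_cases hex : ∃ s ∈ B, dist a s ≤ 4*ξ
      · left
        intro t ht
        by_contra htB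
        apply ha'
        refine ⟨hex, ⟨t, htB, ?_⟩⟩
        rw [Metric.mem_closedBall] at ht
        rw [dist_comm]
        linarith
      · right
        intro t ht htB
        apply hex
        refine ⟨t, htB, ?_⟩
        rw [Metric.mem_closedBall] at ht
        rw [dist_comm]
        linarith
    have hW0u : IsUnitaryMat (Aux.kron U (1 : Matrix (Λ → Fin d) (Λ → Fin d) ℂ)) :=
      Aux.kron_unitary hUu Aux.unitary_one
    have hW0g : IsGSymm u (Aux.kron U (1 : Matrix (Λ → Fin d) (Λ → Fin d) ℂ)) :=
      Aux.kron_gsymm hUG Aux.gsymm_one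
    have hSDu := Aux.swapM_unitary (d := d) (Metric.closedBall a (2*ξ))
    have hSDg := Aux.swapM_gsymm (u := u) (d := d) (Metric.closedBall a (2*ξ))
    -- K and its properties
    have hKu : IsUnitaryMat ((Aux.kron U 1)ᴴ * Aux.swapM (Metric.closedBall a (2*ξ))
        * Aux.kron U 1 * Aux.swapM (Metric.closedBall a (2*ξ))) :=
      Aux.unitary_mul (Aux.unitary_mul (Aux.unitary_mul
        (Aux.unitary_conjTranspose hW0u) hSDu) hW0u) hSDu
    have hKg : IsGSymm u ((Aux.kron U 1)ᴴ * Aux.swapM (Metric.closedBall a (2*ξ))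
        * Aux.kron U 1 * Aux.swapM (Metric.closedBall a (2*ξ))) :=
      Aux.gsymm_mul (Aux.gsymm_mul (Aux.gsymm_mul
        (Aux.gsymm_conjTranspose hu_unit hu_mul hW0g) hSDg) hW0g) hSDg
    have hKsupp : SupportedOn
        (Sum.inl '' Metric.closedBall a (3*ξ) ∪ Sum.inr '' Metric.closedBall a (2*ξ))
        ((Aux.kron U 1)ᴴ * Aux.swapM (Metric.closedBall a (2*ξ))
          * Aux.kron U 1 * Aux.swapM (Metric.closedBall a (2*ξ))) := by
      apply Aux.supportedOn_mul
      · exact Aux.double_swap_supported hUu c (fun r O₁ hO₁ => hUconj r O₁ hO₁)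
          (Metric.closedBall a (2*ξ)) (Metric.closedBall a (3*ξ)) hfT
      · exact Aux.supportedOn_mono (Aux.union_image_subset hD3 (subset_refl _))
          (Aux.swapM_supported _)
    have hKB : SupportedOn (Sum.inl '' B ∪ Sum.inr '' B)
          ((Aux.kron U 1)ᴴ * Aux.swapM (Metric.closedBall a (2*ξ))
            * Aux.kron U 1 * Aux.swapM (Metric.closedBall a (2*ξ)))
        ∨ SupportedOn (Sum.inl '' B ∪ Sum.inr '' B)ᶜ
          ((Aux.kron U 1)ᴴ * Aux.swapM (Metric.closedBall a (2*ξ))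
            * Aux.kron U 1 * Aux.swapM (Metric.closedBall a (2*ξ))) := by
      rcases hball with h | h
      · left
        exact Aux.supportedOn_mono
          (Aux.union_image_subset h (fun t ht => h (hD3 ht))) hKsupp
      · right
        exact Aux.supportedOn_mono
          (Aux.union_image_subset_compl (fun t ht => h ht) (fun t ht => h (hD3 ht))) hKsupp
    -- stacking identities
    have hstackL := Φ.stacking Λ Λ A B (A \ {a}) B U 1 hUu hUG Aux.unitary_one Aux.gsymm_one
    rw [← Aux.kron_eq_reindex, Φ.norm_one, add_zero] at hstackL
    have hstackR := Φ.stacking Λ Λ A B (A \ {a}) B 1 U Aux.unitary_one Aux.gsymm_one hUu hUG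
    rw [← Aux.kron_eq_reindex, Φ.norm_one, zero_add] at hstackR
    -- step 1 : multiply by K on the right
    have hstep1 := Φ.right_inv (Λ ⊕ Λ) (Sum.inl '' A ∪ Sum.inr '' (A \ {a}))
      (Sum.inl '' B ∪ Sum.inr '' B) (Aux.kron U 1) _ hW0u hW0g hKu hKg hKB
    have hW0K : Aux.kron U (1 : Matrix (Λ → Fin d) (Λ → Fin d) ℂ)
        * ((Aux.kron U 1)ᴴ * Aux.swapM (Metric.closedBall a (2*ξ))
          * Aux.kron U 1 * Aux.swapM (Metric.closedBall a (2*ξ)))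
        = Aux.swapM (Metric.closedBall a (2*ξ)) * Aux.kron U 1
          * Aux.swapM (Metric.closedBall a (2*ξ)) := by
      simp only [← Matrix.mul_assoc]
      rw [hW0u.2, Matrix.one_mul]
    rw [hW0K] at hstep1
    -- M1 properties
    have hM1u : IsUnitaryMat (Aux.swapM (Metric.closedBall a (2*ξ)) * Aux.kron U 1
        * Aux.swapM (Metric.closedBall a (2*ξ))) :=
      Aux.unitary_mul (Aux.unitary_mul hSDu hW0u) hSDu
    have hM1g : IsGSymm u (Aux.swapM (Metric.closedBall a (2*ξ)) * Aux.kron U 1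
        * Aux.swapM (Metric.closedBall a (2*ξ))) :=
      Aux.gsymm_mul (Aux.gsymm_mul hSDg hW0g) hSDg
    -- subset facts for the four swap regions
    have hQ1A : (Metric.closedBall a (2*ξ))ᶜ ∩ A ∩ B ⊆ A := fun t ht => ht.1.2
    have hQ1A' : (Metric.closedBall a (2*ξ))ᶜ ∩ A ∩ B ⊆ A \ {a} := by
      rintro t ⟨⟨htD, htA⟩, htB⟩
      exact ⟨htA, fun h => htD (h ▸ haD)⟩
    have hQ2A : (Metric.closedBall a (2*ξ))ᶜ ∩ A ∩ Bᶜ ⊆ A := fun t ht => ht.1.2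
    have hQ2A' : (Metric.closedBall a (2*ξ))ᶜ ∩ A ∩ Bᶜ ⊆ A \ {a} := by
      rintro t ⟨⟨htD, htA⟩, htB⟩
      exact ⟨htA, fun h => htD (h ▸ haD)⟩
    -- conjugation steps
    have hc1 := omega_conj Φ (Sum.inl '' A ∪ Sum.inr '' (A \ {a}))
      (Sum.inl '' B ∪ Sum.inr '' B) _ hM1u hM1g ((Metric.closedBall a (2*ξ))ᶜ ∩ A ∩ B)
      (Or.inl (Aux.supportedOn_mono (Aux.union_image_subset hQ1A hQ1A')
        (Aux.swapM_supported _)))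
      (Or.inl (Aux.supportedOn_mono
        (Aux.union_image_subset (fun t ht => ht.2) (fun t ht => ht.2))
        (Aux.swapM_supported _)))
    have hM2u := Aux.unitary_mul (Aux.unitary_mul (Aux.swapM_unitary (d := d) ((Metric.closedBall a (2*ξ))ᶜ ∩ A ∩ B)) hM1u)
      (Aux.swapM_unitary (d := d) ((Metric.closedBall a (2*ξ))ᶜ ∩ A ∩ B))
    have hM2g := Aux.gsymm_mul (Aux.gsymm_mul (Aux.swapM_gsymm (u := u) (d := d) ((Metric.closedBall a (2*ξ))ᶜ ∩ A ∩ B)) hM1g)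
      (Aux.swapM_gsymm (u := u) (d := d) ((Metric.closedBall a (2*ξ))ᶜ ∩ A ∩ B))
    have hc2 := omega_conj Φ (Sum.inl '' A ∪ Sum.inr '' (A \ {a}))
      (Sum.inl '' B ∪ Sum.inr '' B) _ hM2u hM2g ((Metric.closedBall a (2*ξ))ᶜ ∩ A ∩ Bᶜ)
      (Or.inl (Aux.supportedOn_mono (Aux.union_image_subset hQ2A hQ2A')
        (Aux.swapM_supported _)))
      (Or.inr (Aux.supportedOn_mono
        (Aux.union_image_subset_compl (fun t ht => ht.2) (fun t ht => ht.2))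
        (Aux.swapM_supported _)))
    have hM3u := Aux.unitary_mul (Aux.unitary_mul (Aux.swapM_unitary (d := d) ((Metric.closedBall a (2*ξ))ᶜ ∩ A ∩ Bᶜ)) hM2u)
      (Aux.swapM_unitary (d := d) ((Metric.closedBall a (2*ξ))ᶜ ∩ A ∩ Bᶜ))
    have hM3g := Aux.gsymm_mul (Aux.gsymm_mul (Aux.swapM_gsymm (u := u) (d := d) ((Metric.closedBall a (2*ξ))ᶜ ∩ A ∩ Bᶜ)) hM2g)
      (Aux.swapM_gsymm (u := u) (d := d) ((Metric.closedBall a (2*ξ))ᶜ ∩ A ∩ Bᶜ))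
    have hc3 := omega_conj Φ (Sum.inl '' A ∪ Sum.inr '' (A \ {a}))
      (Sum.inl '' B ∪ Sum.inr '' B) _ hM3u hM3g ((Metric.closedBall a (2*ξ))ᶜ ∩ Aᶜ ∩ B)
      (Or.inr (Aux.supportedOn_mono
        (Aux.union_image_subset_compl (fun t ht => ht.1.2)
          (fun t ht hmem => ht.1.2 hmem.1))
        (Aux.swapM_supported _)))
      (Or.inl (Aux.supportedOn_mono
        (Aux.union_image_subset (fun t ht => ht.2) (fun t ht => ht.2))
        (Aux.swapM_supported _)))
    have hM4u := Aux.unitary_mul (Aux.unitary_mul (Aux.swapM_unitary (d := d) ((Metric.closedBall a (2*ξ))ᶜ ∩ Aᶜ ∩ B)) hM3u)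
      (Aux.swapM_unitary (d := d) ((Metric.closedBall a (2*ξ))ᶜ ∩ Aᶜ ∩ B))
    have hM4g := Aux.gsymm_mul (Aux.gsymm_mul (Aux.swapM_gsymm (u := u) (d := d) ((Metric.closedBall a (2*ξ))ᶜ ∩ Aᶜ ∩ B)) hM3g)
      (Aux.swapM_gsymm (u := u) (d := d) ((Metric.closedBall a (2*ξ))ᶜ ∩ Aᶜ ∩ B))
    have hc4 := omega_conj Φ (Sum.inl '' A ∪ Sum.inr '' (A \ {a}))
      (Sum.inl '' B ∪ Sum.inr '' B) _ hM4u hM4g ((Metric.closedBall a (2*ξ))ᶜ ∩ Aᶜ ∩ Bᶜ)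
      (Or.inr (Aux.supportedOn_mono
        (Aux.union_image_subset_compl (fun t ht => ht.1.2)
          (fun t ht hmem => ht.1.2 hmem.1))
        (Aux.swapM_supported _)))
      (Or.inr (Aux.supportedOn_mono
        (Aux.union_image_subset_compl (fun t ht => ht.2) (fun t ht => ht.2))
        (Aux.swapM_supported _)))
    rw [Aux.conj_chain (Metric.closedBall a (2*ξ)) A B U 1] at hc4
    rw [hc3, hc2, hc1, hstep1, hstackL, hstackR] at hc4
    exact hc4.symm
  · -- Part (ii)
    intro b hbB hb'
    have hbD : b ∈ Metric.closedBall b (2*ξ) := Metric.mem_closedBall_self (by linarith)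
    have hD3 : Metric.closedBall b (2*ξ) ⊆ Metric.closedBall b (3*ξ) := by
      intro t ht
      rw [Metric.mem_closedBall] at ht ⊢
      linarith
    have hfT : ∀ r ∈ Metric.closedBall b (2*ξ),
        Metric.closedBall r ξ ⊆ Metric.closedBall b (3*ξ) := by
      intro r hr t ht
      rw [Metric.mem_closedBall] at hr ht ⊢
      calc dist t b ≤ dist t r + dist r b := dist_triangle t r b
      _ ≤ 3*ξ := by linarith
    have hball : Metric.closedBall b (3*ξ) ⊆ A ∨ Metric.closedBall b (3*ξ) ⊆ Aᶜ := by
      by_cases hex : ∃ s ∈ A, dist b s ≤ 4*ξ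
      · left
        intro t ht
        by_contra htA
        apply hb'
        refine ⟨hex, ⟨t, htA, ?_⟩⟩
        rw [Metric.mem_closedBall] at ht
        rw [dist_comm]
        linarith
      · right
        intro t ht htA
        apply hex
        refine ⟨t, htA, ?_⟩
        rw [Metric.mem_closedBall] at ht
        rw [dist_comm]
        linarith
    have hW0u : IsUnitaryMat (Aux.kron U (1 : Matrix (Λ → Fin d) (Λ → Fin d) ℂ)) :=
      Aux.kron_unitary hUu Aux.unitary_one
    have hW0g : IsGSymm u (Aux.kron U (1 : Matrix (Λ → Fin d) (Λ → Fin d) ℂ)) :=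
      Aux.kron_gsymm hUG Aux.gsymm_one
    have hSDu := Aux.swapM_unitary (d := d) (Metric.closedBall b (2*ξ))
    have hSDg := Aux.swapM_gsymm (u := u) (d := d) (Metric.closedBall b (2*ξ))
    -- L and its properties
    have hLu : IsUnitaryMat (Aux.swapM (Metric.closedBall b (2*ξ)) * (Aux.kron U 1
        * Aux.swapM (Metric.closedBall b (2*ξ)) * (Aux.kron U 1)ᴴ)) :=
      Aux.unitary_mul hSDu (Aux.unitary_mul (Aux.unitary_mul hW0u hSDu)
        (Aux.unitary_conjTranspose hW0u))
    have hLg : IsGSymm u (Aux.swapM (Metric.closedBall b (2*ξ)) * (Aux.kron U 1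
        * Aux.swapM (Metric.closedBall b (2*ξ)) * (Aux.kron U 1)ᴴ)) :=
      Aux.gsymm_mul hSDg (Aux.gsymm_mul (Aux.gsymm_mul hW0g hSDg)
        (Aux.gsymm_conjTranspose hu_unit hu_mul hW0g))
    have hconj' : ∀ (r : Λ) (O₁ : Matrix (Λ → Fin d) (Λ → Fin d) ℂ), SupportedOn {r} O₁ →
        SupportedOn (Metric.closedBall r ξ) ((Uᴴ)ᴴ * O₁ * Uᴴ) := by
      intro r O₁ hO₁
      rw [Matrix.conjTranspose_conjTranspose]
      exact Aux.lpu_inv ⟨hUu, hUconj⟩ r O₁ hO₁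
    have hmid : (Aux.kron Uᴴ (1 : Matrix (Λ → Fin d) (Λ → Fin d) ℂ))ᴴ
          * Aux.swapM (Metric.closedBall b (2*ξ)) * Aux.kron Uᴴ 1
        = Aux.kron U 1 * Aux.swapM (Metric.closedBall b (2*ξ)) * (Aux.kron U 1)ᴴ := by
      rw [Aux.kron_conjTranspose, Matrix.conjTranspose_conjTranspose,
        Matrix.conjTranspose_one, Aux.kron_conjTranspose, Matrix.conjTranspose_one]
    have hLsupp : SupportedOn
        (Sum.inl '' Metric.closedBall b (3*ξ) ∪ Sum.inr '' Metric.closedBall b (2*ξ))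
        (Aux.swapM (Metric.closedBall b (2*ξ)) * (Aux.kron U 1
          * Aux.swapM (Metric.closedBall b (2*ξ)) * (Aux.kron U 1)ᴴ)) := by
      apply Aux.supportedOn_mul
      · exact Aux.supportedOn_mono (Aux.union_image_subset hD3 (subset_refl _))
          (Aux.swapM_supported _)
      · rw [← hmid]
        exact Aux.double_swap_supported (Aux.unitary_conjTranspose hUu) c hconj'
          (Metric.closedBall b (2*ξ)) (Metric.closedBall b (3*ξ)) hfT
    have hLA : SupportedOn (Sum.inl '' A ∪ Sum.inr '' A)
          (Aux.swapM (Metric.closedBall b (2*ξ)) * (Aux.kron U 1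
            * Aux.swapM (Metric.closedBall b (2*ξ)) * (Aux.kron U 1)ᴴ))
        ∨ SupportedOn (Sum.inl '' A ∪ Sum.inr '' A)ᶜ
          (Aux.swapM (Metric.closedBall b (2*ξ)) * (Aux.kron U 1
            * Aux.swapM (Metric.closedBall b (2*ξ)) * (Aux.kron U 1)ᴴ)) := by
      rcases hball with h | h
      · left
        exact Aux.supportedOn_mono
          (Aux.union_image_subset h (fun t ht => h (hD3 ht))) hLsupp
      · right
        exact Aux.supportedOn_mono
          (Aux.union_image_subset_compl (fun t ht => h ht) (fun t ht => h (hD3 ht))) hLsupp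
    -- stacking identities
    have hstackL := Φ.stacking Λ Λ A B A (B \ {b}) U 1 hUu hUG Aux.unitary_one Aux.gsymm_one
    rw [← Aux.kron_eq_reindex, Φ.norm_one, add_zero] at hstackL
    have hstackR := Φ.stacking Λ Λ A B A (B \ {b}) 1 U Aux.unitary_one Aux.gsymm_one hUu hUG
    rw [← Aux.kron_eq_reindex, Φ.norm_one, zero_add] at hstackR
    -- step 1 : multiply by L on the left
    have hstep1 := Φ.left_inv (Λ ⊕ Λ) (Sum.inl '' A ∪ Sum.inr '' A)
      (Sum.inl '' B ∪ Sum.inr '' (B \ {b})) (Aux.kron U 1) _ hW0u hW0g hLu hLg hLA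
    have hLW0 : Aux.swapM (Metric.closedBall b (2*ξ)) * (Aux.kron U 1
        * Aux.swapM (Metric.closedBall b (2*ξ)) * (Aux.kron U 1)ᴴ)
        * Aux.kron U (1 : Matrix (Λ → Fin d) (Λ → Fin d) ℂ)
        = Aux.swapM (Metric.closedBall b (2*ξ)) * Aux.kron U 1
          * Aux.swapM (Metric.closedBall b (2*ξ)) := by
      simp only [Matrix.mul_assoc]
      rw [hW0u.1, Matrix.mul_one]
    rw [hLW0] at hstep1
    -- M1 properties
    have hM1u : IsUnitaryMat (Aux.swapM (Metric.closedBall b (2*ξ)) * Aux.kron U 1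
        * Aux.swapM (Metric.closedBall b (2*ξ))) :=
      Aux.unitary_mul (Aux.unitary_mul hSDu hW0u) hSDu
    have hM1g : IsGSymm u (Aux.swapM (Metric.closedBall b (2*ξ)) * Aux.kron U 1
        * Aux.swapM (Metric.closedBall b (2*ξ))) :=
      Aux.gsymm_mul (Aux.gsymm_mul hSDg hW0g) hSDg
    have hQ1B : (Metric.closedBall b (2*ξ))ᶜ ∩ A ∩ B ⊆ B := fun t ht => ht.2
    have hQ1B' : (Metric.closedBall b (2*ξ))ᶜ ∩ A ∩ B ⊆ B \ {b} := by
      rintro t ⟨⟨htD, htA⟩, htB⟩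
      exact ⟨htB, fun h => htD (h ▸ hbD)⟩
    have hQ3B : (Metric.closedBall b (2*ξ))ᶜ ∩ Aᶜ ∩ B ⊆ B := fun t ht => ht.2
    have hQ3B' : (Metric.closedBall b (2*ξ))ᶜ ∩ Aᶜ ∩ B ⊆ B \ {b} := by
      rintro t ⟨⟨htD, htA⟩, htB⟩
      exact ⟨htB, fun h => htD (h ▸ hbD)⟩
    -- conjugation steps
    have hc1 := omega_conj Φ (Sum.inl '' A ∪ Sum.inr '' A)
      (Sum.inl '' B ∪ Sum.inr '' (B \ {b})) _ hM1u hM1g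
      ((Metric.closedBall b (2*ξ))ᶜ ∩ A ∩ B)
      (Or.inl (Aux.supportedOn_mono
        (Aux.union_image_subset (fun t ht => ht.1.2) (fun t ht => ht.1.2))
        (Aux.swapM_supported _)))
      (Or.inl (Aux.supportedOn_mono (Aux.union_image_subset hQ1B hQ1B')
        (Aux.swapM_supported _)))
    have hM2u := Aux.unitary_mul (Aux.unitary_mul (Aux.swapM_unitary (d := d) ((Metric.closedBall b (2*ξ))ᶜ ∩ A ∩ B)) hM1u)
      (Aux.swapM_unitary (d := d) ((Metric.closedBall b (2*ξ))ᶜ ∩ A ∩ B))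
    have hM2g := Aux.gsymm_mul (Aux.gsymm_mul (Aux.swapM_gsymm (u := u) (d := d) ((Metric.closedBall b (2*ξ))ᶜ ∩ A ∩ B)) hM1g)
      (Aux.swapM_gsymm (u := u) (d := d) ((Metric.closedBall b (2*ξ))ᶜ ∩ A ∩ B))
    have hc2 := omega_conj Φ (Sum.inl '' A ∪ Sum.inr '' A)
      (Sum.inl '' B ∪ Sum.inr '' (B \ {b})) _ hM2u hM2g
      ((Metric.closedBall b (2*ξ))ᶜ ∩ A ∩ Bᶜ)
      (Or.inl (Aux.supportedOn_mono
        (Aux.union_image_subset (fun t ht => ht.1.2) (fun t ht => ht.1.2))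
        (Aux.swapM_supported _)))
      (Or.inr (Aux.supportedOn_mono
        (Aux.union_image_subset_compl (fun t ht => ht.2)
          (fun t ht hmem => ht.2 hmem.1))
        (Aux.swapM_supported _)))
    have hM3u := Aux.unitary_mul (Aux.unitary_mul (Aux.swapM_unitary (d := d) ((Metric.closedBall b (2*ξ))ᶜ ∩ A ∩ Bᶜ)) hM2u)
      (Aux.swapM_unitary (d := d) ((Metric.closedBall b (2*ξ))ᶜ ∩ A ∩ Bᶜ))
    have hM3g := Aux.gsymm_mul (Aux.gsymm_mul (Aux.swapM_gsymm (u := u) (d := d) ((Metric.closedBall b (2*ξ))ᶜ ∩ A ∩ Bᶜ)) hM2g)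
      (Aux.swapM_gsymm (u := u) (d := d) ((Metric.closedBall b (2*ξ))ᶜ ∩ A ∩ Bᶜ))
    have hc3 := omega_conj Φ (Sum.inl '' A ∪ Sum.inr '' A)
      (Sum.inl '' B ∪ Sum.inr '' (B \ {b})) _ hM3u hM3g
      ((Metric.closedBall b (2*ξ))ᶜ ∩ Aᶜ ∩ B)
      (Or.inr (Aux.supportedOn_mono
        (Aux.union_image_subset_compl (fun t ht => ht.1.2) (fun t ht => ht.1.2))
        (Aux.swapM_supported _)))
      (Or.inl (Aux.supportedOn_mono (Aux.union_image_subset hQ3B hQ3B')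
        (Aux.swapM_supported _)))
    have hM4u := Aux.unitary_mul (Aux.unitary_mul (Aux.swapM_unitary (d := d) ((Metric.closedBall b (2*ξ))ᶜ ∩ Aᶜ ∩ B)) hM3u)
      (Aux.swapM_unitary (d := d) ((Metric.closedBall b (2*ξ))ᶜ ∩ Aᶜ ∩ B))
    have hM4g := Aux.gsymm_mul (Aux.gsymm_mul (Aux.swapM_gsymm (u := u) (d := d) ((Metric.closedBall b (2*ξ))ᶜ ∩ Aᶜ ∩ B)) hM3g)
      (Aux.swapM_gsymm (u := u) (d := d) ((Metric.closedBall b (2*ξ))ᶜ ∩ Aᶜ ∩ B))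
    have hc4 := omega_conj Φ (Sum.inl '' A ∪ Sum.inr '' A)
      (Sum.inl '' B ∪ Sum.inr '' (B \ {b})) _ hM4u hM4g
      ((Metric.closedBall b (2*ξ))ᶜ ∩ Aᶜ ∩ Bᶜ)
      (Or.inr (Aux.supportedOn_mono
        (Aux.union_image_subset_compl (fun t ht => ht.1.2) (fun t ht => ht.1.2))
        (Aux.swapM_supported _)))
      (Or.inr (Aux.supportedOn_mono
        (Aux.union_image_subset_compl (fun t ht => ht.2)
          (fun t ht hmem => ht.2 hmem.1))
        (Aux.swapM_supported _)))
    rw [Aux.conj_chain (Metric.closedBall b (2*ξ)) A B U 1] at hc4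
    rw [hc3, hc2, hc1, hstep1, hstackL, hstackR] at hc4
    exact hc4.symm
end
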